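/- arXiv:2508.08008 — 3 statements merged into one kernel-verified Lean document; each statement's English description precedes it below -/
import Mathlib

section
/- Measure of a parabolic boundary strip in a Lipschitz graph domain (Lemma 4.2): For every n ≥ 1 and K₀ > 0 there is C > 0 depending only on n and K₀ such that the following holds. Let φ : ℝ^{n−1}×ℝ → ℝ satisfy |φ(x',t) − φ(y',s)| ≤ K₀·(|x'−y'|²+|t−s|)^{1/2} for all (x',t),(y',s), and set Ω := {(x',x_n,t) : x_n > φ(x',t)} and Γ := {(x',x_n,t) : x_n = φ(x',t)}. Then for every (x₀,t₀) in the closure of Ω and all r > 0, d > 0, the Lebesgue measure of the set {(x,t) ∈ Ω ∩ Q_r(x₀,t₀) : d_p((x,t), Γ) ≤ d} is at most C·r^{n+1}·d. -/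
open MeasureTheory Set
open scoped ENNReal

noncomputable section

/-- Points of the parabolic space `ℝⁿ × ℝ`. -/
abbrev Pt (n : ℕ) := EuclideanSpace ℝ (Fin n) × ℝ

/-- The parabolic norm `|(x,t)| = √(|x|² + |t|)` (its value for `t ≤ 0`; all uses below
are at points whose time component is nonpositive). -/
def pnorm {n : ℕ} (z : Pt n) : ℝ := Real.sqrt (‖z.1‖ ^ 2 + |z.2|)

/-- The parabolic distance `d_p((x,t),(y,s)) = √(|x-y|² + |t-s|)`. -/
def pdist {n : ℕ} (z w : Pt n) : ℝ := Real.sqrt (‖z.1 - w.1‖ ^ 2 + |z.2 - w.2|)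

/-- The parabolic cylinder `Q_r(z₀) = B_r(x₀) × (t₀ - r², t₀]`. -/
def pCyl {n : ℕ} (z₀ : Pt n) (r : ℝ) : Set (Pt n) :=
  {z | ‖z.1 - z₀.1‖ < r ∧ z₀.2 - r ^ 2 < z.2 ∧ z.2 ≤ z₀.2}

/-- Pucci's maximal operator `𝓜⁺(M) = Λ·Σ_{λᵢ>0} λᵢ + λ·Σ_{λᵢ<0} λᵢ`. -/
def pucciPlus {n : ℕ} (lam Lam : ℝ) (M : Matrix (Fin n) (Fin n) ℝ) : ℝ :=
  if hM : M.IsHermitian then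
    ∑ i, (if 0 < hM.eigenvalues i then Lam else lam) * hM.eigenvalues i
  else 0

/-- Pucci's minimal operator `𝓜⁻(M) = λ·Σ_{λᵢ>0} λᵢ + Λ·Σ_{λᵢ<0} λᵢ`. -/
def pucciMinus {n : ℕ} (lam Lam : ℝ) (M : Matrix (Fin n) (Fin n) ℝ) : ℝ :=
  if hM : M.IsHermitian then
    ∑ i, (if 0 < hM.eigenvalues i then lam else Lam) * hM.eigenvalues i
  else 0

/-- Euclidean dot product. -/
def dotp {n : ℕ} (x y : EuclideanSpace ℝ (Fin n)) : ℝ := ∑ i, x i * y i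

/-- `H` is the (entrywise, via iterated directional derivatives) spatial Hessian of `u`
at the point `z`. -/
def IsSpatialHessianAt {n : ℕ} (u : Pt n → ℝ) (H : Matrix (Fin n) (Fin n) ℝ) (z : Pt n) :
    Prop :=
  ∀ i j, HasLineDerivAt ℝ
    (fun x => lineDeriv ℝ (fun y => u (y, z.2)) x (EuclideanSpace.single j 1))
    (H i j) z.1 (EuclideanSpace.single i 1)

/-- `a` is the time derivative of `u` at `z`. -/
def IsTimeDerivAt {n : ℕ} (u : Pt n → ℝ) (a : ℝ) (z : Pt n) : Prop :=
  HasDerivAt (fun s => u (z.1, s)) a z.2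

/-- Classical membership in the Pucci class `S*(λ,Λ,f)` on `D`, with spatial Hessian `Hu`
and time derivative `ut`: `∂ₜu - 𝓜⁺(D²u) ≤ |f|` and `∂ₜu - 𝓜⁻(D²u) ≥ -|f|`. -/
def InPucciStar {n : ℕ} (lam Lam : ℝ) (f u : Pt n → ℝ)
    (Hu : Pt n → Matrix (Fin n) (Fin n) ℝ) (ut : Pt n → ℝ) (D : Set (Pt n)) : Prop :=
  ContinuousOn u D ∧
    ∀ z ∈ D, IsSpatialHessianAt u (Hu z) z ∧ IsTimeDerivAt u (ut z) z ∧
      ut z - pucciPlus lam Lam (Hu z) ≤ |f z| ∧ -|f z| ≤ ut z - pucciMinus lam Lam (Hu z)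

/-- Classical membership in the Pucci class `S(λ,Λ,0)` on `D`:
`𝓜⁻(D²u) ≤ ∂ₜu ≤ 𝓜⁺(D²u)`. -/
def InPucciZero {n : ℕ} (lam Lam : ℝ) (u : Pt n → ℝ)
    (Hu : Pt n → Matrix (Fin n) (Fin n) ℝ) (ut : Pt n → ℝ) (D : Set (Pt n)) : Prop :=
  ContinuousOn u D ∧
    ∀ z ∈ D, IsSpatialHessianAt u (Hu z) z ∧ IsTimeDerivAt u (ut z) z ∧
      pucciMinus lam Lam (Hu z) ≤ ut z ∧ ut z ≤ pucciPlus lam Lam (Hu z)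

/-- A Dini function: nondecreasing, nonnegative, with finite Dini integral. -/
def DiniFunction (ω : ℝ → ℝ) : Prop :=
  (∀ r, 0 ≤ ω r) ∧ MonotoneOn ω (Ici 0) ∧
    IntegrableOn (fun r => ω r / r) (Ioo (0 : ℝ) 1)

/-- The Dini integral `∫₀¹ ω(r)/r dr` plus `ω(1)`. -/
def diniNorm (ω : ℝ → ℝ) : ℝ := (∫ r in Ioo (0 : ℝ) 1, ω r / r) + ω 1

/-- The sup of `|u|` over `S` (the `L^∞` norm). -/
def supAbs {n : ℕ} (u : Pt n → ℝ) (S : Set (Pt n)) : ℝ := ⨆ z ∈ S, |u z|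

/-- The `L^p` norm of `f` over `S`. -/
def lpNorm {n : ℕ} (p : ℝ) (f : Pt n → ℝ) (S : Set (Pt n)) : ℝ :=
  (∫ z in S, |f z| ^ p) ^ p⁻¹

/-- The parabolic boundary of `Ω`. -/
def pBoundary {n : ℕ} (Ω : Set (Pt n)) : Set (Pt n) :=
  {z ∈ closure Ω | ∀ r > 0, ¬ pCyl z r ⊆ Ω}

/-- The bottom part of the parabolic boundary of `Ω`. -/
def pBotBoundary {n : ℕ} (Ω : Set (Pt n)) : Set (Pt n) :=
  {z ∈ pBoundary Ω | ∃ r > 0, pCyl z r ∩ Ω = ∅}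

/-- `f ∈ C^{-1,Dini}` at `z₀`, relative to `Ω`, with modulus `ω`. -/
def CMinusOneDiniAt {n : ℕ} (f : Pt n → ℝ) (Ω : Set (Pt n)) (ω : ℝ → ℝ) (z₀ : Pt n) :
    Prop :=
  ∀ r : ℝ, 0 < r → r < 1 →
    ((volume (Ω ∩ pCyl z₀ r)).toReal⁻¹ * ∫ z in Ω ∩ pCyl z₀ r, |f z| ^ ((n : ℝ) + 1))
        ^ (((n : ℝ) + 1)⁻¹) ≤ r⁻¹ * ω r

/-- The quantity `ρ = √(|x-x₀|² - ((x-x₀)·ν)² + |t-t₀|)`. -/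
def rho {n : ℕ} (z₀ : Pt n) (ν : EuclideanSpace ℝ (Fin n)) (z : Pt n) : ℝ :=
  Real.sqrt (‖z.1 - z₀.1‖ ^ 2 - dotp (z.1 - z₀.1) ν ^ 2 + |z.2 - z₀.2|)

/-- `Ω` satisfies the exterior `C^{1,Dini}` condition at `z₀` with modulus `ω`. -/
def ExtDiniAt {n : ℕ} (Ω : Set (Pt n)) (ω : ℝ → ℝ) (z₀ : Pt n) : Prop :=
  ∃ ν : EuclideanSpace ℝ (Fin n), ‖ν‖ = 1 ∧
    ∀ z ∈ pCyl z₀ 1, dotp (z.1 - z₀.1) ν < -(rho z₀ ν z * ω (rho z₀ ν z)) → z ∉ Ω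

/-- `g ∈ C^{1,Dini}` at `z₀` on `Γ`, with modulus `ω` and slope `l`. -/
def C1DiniAt {n : ℕ} (g : Pt n → ℝ) (Γ : Set (Pt n)) (ω : ℝ → ℝ) (z₀ : Pt n)
    (l : EuclideanSpace ℝ (Fin n)) : Prop :=
  ∀ z ∈ Γ ∩ pCyl z₀ 1,
    |g z - g z₀ - dotp l (z.1 - z₀.1)| ≤ pdist z z₀ * ω (pdist z z₀)

/-- `F` is uniformly elliptic with constants `λ, Λ`. -/
def UnifElliptic {n : ℕ} (lam Lam : ℝ) (F : Matrix (Fin n) (Fin n) ℝ → ℝ) : Prop :=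
  ∀ M N : Matrix (Fin n) (Fin n) ℝ, M.IsHermitian → N.IsHermitian →
    pucciMinus lam Lam M ≤ F (M + N) - F N ∧ F (M + N) - F N ≤ pucciPlus lam Lam M

/-- Frobenius norm of a matrix. -/
def frobNorm {n : ℕ} (M : Matrix (Fin n) (Fin n) ℝ) : ℝ :=
  Real.sqrt (∑ i, ∑ j, (M i j) ^ 2)

/-- The supergraph domain `{x_n > φ(x',t)}` of `φ` (dimension `n = m+1`). -/
def graphDomain (m : ℕ) (φ : (Fin m → ℝ) × ℝ → ℝ) : Set (Pt (m + 1)) :=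
  {z | φ (fun i => z.1 i.castSucc, z.2) < z.1 (Fin.last m)}

/-- The lateral graph boundary `{x_n = φ(x',t)}` of `φ`. -/
def graphBoundary (m : ℕ) (φ : (Fin m → ℝ) × ℝ → ℝ) : Set (Pt (m + 1)) :=
  {z | z.1 (Fin.last m) = φ (fun i => z.1 i.castSucc, z.2)}

/-- The upper-half parabolic cylinder `Q_r⁺(z₀)`. -/
def flatHalfCyl (m : ℕ) (z₀ : Pt (m + 1)) (r : ℝ) : Set (Pt (m + 1)) :=
  pCyl z₀ r ∩ {z | z₀.1 (Fin.last m) < z.1 (Fin.last m)}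

/-- The flat boundary piece `S_r(z₀)`. -/
def flatBase (m : ℕ) (z₀ : Pt (m + 1)) (r : ℝ) : Set (Pt (m + 1)) :=
  {z | z.1 (Fin.last m) = z₀.1 (Fin.last m) ∧ ‖z.1 - z₀.1‖ < r ∧
    z₀.2 - r ^ 2 < z.2 ∧ z.2 ≤ z₀.2}

/-- A parabolic cube with given center and half-side. -/
structure PCube (n : ℕ) where
  center : Pt n
  half : ℝ
  half_pos : 0 < half

/-- The underlying set `∏ᵢ [xᵢ-r, xᵢ+r] × [t-r², t+r²]` of a parabolic cube. -/
def PCube.toSet {n : ℕ} (Q : PCube n) : Set (Pt n) :=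
  {z | (∀ i, |z.1 i - Q.center.1 i| ≤ Q.half) ∧ |z.2 - Q.center.2| ≤ Q.half ^ 2}

/-- The `9/8`-dilate of a parabolic cube. -/
def PCube.dilate {n : ℕ} (Q : PCube n) : PCube n :=
  ⟨Q.center, (9 / 8) * Q.half, mul_pos (by norm_num) Q.half_pos⟩

/-- The parabolic diameter of a set. -/
def pdiam {n : ℕ} (A : Set (Pt n)) : ℝ := sSup (Set.image2 pdist A A)

/-- The parabolic distance between two sets. -/
def psetDist {n : ℕ} (A B : Set (Pt n)) : ℝ := sInf (Set.image2 pdist A B)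

/-- The parabolic distance from a point to a set. -/
def pdistToSet {n : ℕ} (z : Pt n) (A : Set (Pt n)) : ℝ := sInf ((pdist z) '' A)

end
section Aux

/-- Component bound in Euclidean space. -/
lemma aux_comp_le_norm (m : ℕ) (x : EuclideanSpace ℝ (Fin (m+1))) (j : Fin (m+1)) :
    |x j| ≤ ‖x‖ := by
  rw [EuclideanSpace.norm_eq, ← Real.sqrt_sq_eq_abs]
  apply Real.sqrt_le_sqrt
  have := Finset.single_le_sum (f := fun i => ‖x i‖^2) (fun i _ => sq_nonneg _) (Finset.mem_univ j)
  simpa [sq_abs] using this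

lemma aux_norm_sq (m : ℕ) (x : EuclideanSpace ℝ (Fin (m+1))) :
    ‖x‖ ^ 2 = ∑ i, (x i) ^ 2 := by
  rw [EuclideanSpace.norm_eq, Real.sq_sqrt (by positivity)]
  simp [sq_abs]

lemma aux_equiv_apply (m : ℕ) (x : EuclideanSpace ℝ (Fin (m+1))) :
    (MeasurableEquiv.piFinSuccAbove (fun _ => ℝ) (Fin.last m))
        ((MeasurableEquiv.toLp 2 (Fin (m+1) → ℝ)).symm x)
      = (x (Fin.last m), fun i => x i.castSucc) := by
  refine Prod.ext rfl (funext fun i => ?_)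
  show x ((Fin.last m).succAbove i) = x i.castSucc
  rw [Fin.succAbove_last]

lemma aux_eval_measurable (m : ℕ) (j : Fin (m+1)) :
    Measurable fun x : EuclideanSpace ℝ (Fin (m+1)) => x j :=
  (measurable_pi_apply j).comp (MeasurableEquiv.toLp 2 (Fin (m+1) → ℝ)).symm.measurable

end Aux

/-- **Measure of a parabolic boundary strip in a Lipschitz graph domain** (Lemma 4.2):
in a parabolic Lipschitz graph domain, the part of `Ω ∩ Q_r(z₀)` within parabolic distance
`d` of the lateral boundary has measure at most `C·r^{n+1}·d`.  Here `n = m + 1 ≥ 1`. -/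
theorem boundary_strip_measure (m : ℕ) (K₀ : ℝ) (hK₀ : 0 < K₀) :
    ∃ C : ℝ, 0 < C ∧
      ∀ (φ : (Fin m → ℝ) × ℝ → ℝ),
        (∀ a b : (Fin m → ℝ) × ℝ,
          |φ a - φ b| ≤ K₀ * Real.sqrt ((∑ i, (a.1 i - b.1 i) ^ 2) + |a.2 - b.2|)) →
        ∀ z₀ ∈ closure (graphDomain m φ), ∀ r d : ℝ, 0 < r → 0 < d →
          volume {z ∈ graphDomain m φ ∩ pCyl z₀ r |
              pdistToSet z (graphBoundary m φ) ≤ d} ≤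
            ENNReal.ofReal (C * r ^ (m + 2) * d) := by
  classical
  refine ⟨2 ^ m * (1 + K₀), by positivity, ?_⟩
  intro φ hφ z₀ _ r d hr hd
  -- continuity of φ
  have hφc : Continuous φ := by
    rw [Metric.continuous_iff]
    intro a ε hε
    refine ⟨min 1 (ε ^ 2 / (K₀ ^ 2 * (m + 1))), by positivity, fun b hb => ?_⟩
    have hb1 : dist b a < 1 := lt_of_lt_of_le hb (min_le_left _ _)
    have hb2 : dist b a < ε ^ 2 / (K₀ ^ 2 * (m + 1)) := lt_of_lt_of_le hb (min_le_right _ _)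
    have hD0 : (0:ℝ) ≤ dist b a := dist_nonneg
    have hcoord : ∀ i, (b.1 i - a.1 i) ^ 2 ≤ dist b a ^ 2 := by
      intro i
      have h1 : dist (b.1 i) (a.1 i) ≤ dist b.1 a.1 := dist_le_pi_dist b.1 a.1 i
      have h2 : dist b.1 a.1 ≤ dist b a := le_max_left _ _
      have h3 : |b.1 i - a.1 i| ≤ dist b a := by
        rw [← Real.dist_eq]; exact h1.trans h2
      calc (b.1 i - a.1 i) ^ 2 = |b.1 i - a.1 i| ^ 2 := (sq_abs _).symm
        _ ≤ dist b a ^ 2 := by apply pow_le_pow_left₀ (abs_nonneg _) h3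
    have hsum : (∑ i, (b.1 i - a.1 i) ^ 2) + |b.2 - a.2| ≤ (m + 1) * dist b a := by
      have h1 : (∑ i, (b.1 i - a.1 i) ^ 2) ≤ m * dist b a ^ 2 := by
        calc (∑ i, (b.1 i - a.1 i) ^ 2) ≤ ∑ _i : Fin m, dist b a ^ 2 :=
              Finset.sum_le_sum fun i _ => hcoord i
          _ = m * dist b a ^ 2 := by simp [mul_comm]
      have h2 : dist b a ^ 2 ≤ dist b a := by
        nlinarith
      have h3 : |b.2 - a.2| ≤ dist b a := by
        rw [← Real.dist_eq]; exact le_max_right _ _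
      nlinarith [Nat.cast_nonneg (α := ℝ) m]
    have hKε : K₀ * Real.sqrt ((∑ i, (b.1 i - a.1 i) ^ 2) + |b.2 - a.2|) < ε := by
      have hlt : (∑ i, (b.1 i - a.1 i) ^ 2) + |b.2 - a.2| < ε ^ 2 / K₀ ^ 2 := by
        calc (∑ i, (b.1 i - a.1 i) ^ 2) + |b.2 - a.2| ≤ (m + 1) * dist b a := hsum
          _ < (m + 1) * (ε ^ 2 / (K₀ ^ 2 * (m + 1))) := by
              apply mul_lt_mul_of_pos_left hb2 (by positivity)
          _ = ε ^ 2 / K₀ ^ 2 := by field_simp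
      have hs : Real.sqrt ((∑ i, (b.1 i - a.1 i) ^ 2) + |b.2 - a.2|) < ε / K₀ := by
        rw [show ε / K₀ = Real.sqrt ((ε / K₀) ^ 2) by
          rw [Real.sqrt_sq (by positivity)]]
        apply Real.sqrt_lt_sqrt (by positivity)
        calc (∑ i, (b.1 i - a.1 i) ^ 2) + |b.2 - a.2| < ε ^ 2 / K₀ ^ 2 := hlt
          _ = (ε / K₀) ^ 2 := by ring
      calc K₀ * Real.sqrt _ < K₀ * (ε / K₀) := by
            exact mul_lt_mul_of_pos_left hs hK₀
        _ = ε := by field_simp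
    calc dist (φ b) (φ a) = |φ b - φ a| := Real.dist_eq _ _
      _ ≤ K₀ * Real.sqrt ((∑ i, (b.1 i - a.1 i) ^ 2) + |b.2 - a.2|) := hφ b a
      _ < ε := hKε
  set L : ℝ := (1 + K₀) * d with hLdef
  have hL : 0 < L := by positivity
  set prj : EuclideanSpace ℝ (Fin (m+1)) → (Fin m → ℝ) := fun x i => x i.castSucc with hprj
  set T : Set (Pt (m+1)) :=
    {z | (∀ i : Fin m, |z.1 i.castSucc - z₀.1 i.castSucc| ≤ r) ∧
      (φ (prj z.1, z.2) < z.1 (Fin.last m) ∧ z.1 (Fin.last m) ≤ φ (prj z.1, z.2) + L) ∧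
      (z₀.2 - r ^ 2 < z.2 ∧ z.2 ≤ z₀.2)} with hT
  -- the inclusion
  have hST : {z ∈ graphDomain m φ ∩ pCyl z₀ r |
      pdistToSet z (graphBoundary m φ) ≤ d} ⊆ T := by
    rintro z ⟨⟨hzΩ, hzQ⟩, hzd⟩
    have hzΩ' : φ (prj z.1, z.2) < z.1 (Fin.last m) := hzΩ
    obtain ⟨hQ1, hQ2, hQ3⟩ := hzQ
    refine ⟨?_, ⟨hzΩ', ?_⟩, hQ2, hQ3⟩
    · intro i
      have h1 : |(z.1 - z₀.1) i.castSucc| ≤ ‖z.1 - z₀.1‖ := aux_comp_le_norm m _ _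
      have h2 : (z.1 - z₀.1) i.castSucc = z.1 i.castSucc - z₀.1 i.castSucc := rfl
      rw [h2] at h1
      exact h1.trans hQ1.le
    · -- key: distance to graph controls vertical height
      have key : ∀ w ∈ graphBoundary m φ,
          z.1 (Fin.last m) - φ (prj z.1, z.2) ≤ (1 + K₀) * pdist z w := by
        intro w hw
        have hw' : w.1 (Fin.last m) = φ (prj w.1, w.2) := hw
        have hpd0 : 0 ≤ ‖z.1 - w.1‖ ^ 2 + |z.2 - w.2| := by positivity
        have hnorm_le : ‖z.1 - w.1‖ ≤ pdist z w := by
          rw [pdist, show ‖z.1 - w.1‖ = Real.sqrt (‖z.1 - w.1‖ ^ 2) by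
            rw [Real.sqrt_sq (norm_nonneg _)]]
          exact Real.sqrt_le_sqrt (by simp [abs_nonneg])
        have h1 : |z.1 (Fin.last m) - w.1 (Fin.last m)| ≤ pdist z w := by
          have := aux_comp_le_norm m (z.1 - w.1) (Fin.last m)
          have h2 : (z.1 - w.1) (Fin.last m) = z.1 (Fin.last m) - w.1 (Fin.last m) := rfl
          rw [h2] at this
          exact this.trans hnorm_le
        have h3 : Real.sqrt ((∑ i, (prj z.1 i - prj w.1 i) ^ 2) + |z.2 - w.2|) ≤ pdist z w := by
          rw [pdist]
          apply Real.sqrt_le_sqrt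
          have hsub : (∑ i : Fin m, (prj z.1 i - prj w.1 i) ^ 2) ≤ ‖z.1 - w.1‖ ^ 2 := by
            rw [aux_norm_sq m (z.1 - w.1), Fin.sum_univ_castSucc]
            have : ∀ i : Fin m, (z.1 - w.1) i.castSucc = prj z.1 i - prj w.1 i := fun i => rfl
            simp only [this]
            nlinarith [sq_nonneg ((z.1 - w.1) (Fin.last m))]
          linarith
        have hφzw : φ (prj w.1, w.2) - φ (prj z.1, z.2) ≤ K₀ * pdist z w := by
          have := hφ (prj w.1, w.2) (prj z.1, z.2)
          have habs : |φ (prj w.1, w.2) - φ (prj z.1, z.2)| ≤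
              K₀ * Real.sqrt ((∑ i, (prj w.1 i - prj z.1 i) ^ 2) + |w.2 - z.2|) := this
          have hsym : (∑ i, (prj w.1 i - prj z.1 i) ^ 2) + |w.2 - z.2|
              = (∑ i, (prj z.1 i - prj w.1 i) ^ 2) + |z.2 - w.2| := by
            rw [abs_sub_comm]
            congr 1
            exact Finset.sum_congr rfl fun i _ => by ring
          rw [hsym] at habs
          calc φ (prj w.1, w.2) - φ (prj z.1, z.2) ≤ |φ (prj w.1, w.2) - φ (prj z.1, z.2)| :=
                le_abs_self _
            _ ≤ K₀ * Real.sqrt ((∑ i, (prj z.1 i - prj w.1 i) ^ 2) + |z.2 - w.2|) := habs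
            _ ≤ K₀ * pdist z w := mul_le_mul_of_nonneg_left h3 hK₀.le
        calc z.1 (Fin.last m) - φ (prj z.1, z.2)
            = (z.1 (Fin.last m) - w.1 (Fin.last m)) + (φ (prj w.1, w.2) - φ (prj z.1, z.2)) := by
              rw [hw']; ring
          _ ≤ |z.1 (Fin.last m) - w.1 (Fin.last m)| + K₀ * pdist z w := by
              have := le_abs_self (z.1 (Fin.last m) - w.1 (Fin.last m))
              linarith
          _ ≤ pdist z w + K₀ * pdist z w := by linarith
          _ = (1 + K₀) * pdist z w := by ring
      -- the graph boundary is nonempty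
      have hΓne : (graphBoundary m φ).Nonempty := by
        refine ⟨((WithLp.toLp 2 (fun j => if j = Fin.last m then φ (0, 0) else 0) :
            EuclideanSpace ℝ (Fin (m+1))), (0 : ℝ)), ?_⟩
        show (if Fin.last m = Fin.last m then φ (0, 0) else 0) =
          φ (fun i : Fin m => if i.castSucc = Fin.last m then φ (0, 0) else 0, (0 : ℝ))
        rw [if_pos rfl]
        have h0 : (fun i : Fin m => if i.castSucc = Fin.last m then φ (0, 0) else 0)
            = (0 : Fin m → ℝ) := funext fun i => if_neg (Fin.castSucc_lt_last i).ne
        rw [h0]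
      have hlow : (z.1 (Fin.last m) - φ (prj z.1, z.2)) / (1 + K₀) ≤
          pdistToSet z (graphBoundary m φ) := by
        apply le_csInf (hΓne.image _)
        rintro b ⟨w, hw, rfl⟩
        rw [div_le_iff₀ (by positivity)]
        calc z.1 (Fin.last m) - φ (prj z.1, z.2) ≤ (1 + K₀) * pdist z w := key w hw
          _ = pdist z w * (1 + K₀) := by ring
      have : (z.1 (Fin.last m) - φ (prj z.1, z.2)) / (1 + K₀) ≤ d := hlow.trans hzd
      rw [div_le_iff₀ (by positivity)] at this
      rw [hLdef]
      linarith
  -- measurability of T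
  have hmeasφ : Measurable fun z : Pt (m+1) => φ (prj z.1, z.2) := by
    apply hφc.measurable.comp
    apply Measurable.prodMk
    · exact measurable_pi_lambda _ fun i => (aux_eval_measurable m i.castSucc).comp measurable_fst
    · exact measurable_snd
  have hmeaslast : Measurable fun z : Pt (m+1) => z.1 (Fin.last m) :=
    (aux_eval_measurable m (Fin.last m)).comp measurable_fst
  have hT1meas : MeasurableSet {z : Pt (m+1) |
      ∀ i : Fin m, |z.1 i.castSucc - z₀.1 i.castSucc| ≤ r} := by
    rw [Set.setOf_forall]
    exact MeasurableSet.iInter fun i => measurableSet_le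
      (((aux_eval_measurable m i.castSucc).comp measurable_fst).sub measurable_const).abs
      measurable_const
  have hTmeas : MeasurableSet T := by
    exact hT1meas.inter
      (((measurableSet_lt hmeasφ hmeaslast).inter
        (measurableSet_le hmeaslast (hmeasφ.add measurable_const))).inter
       ((measurableSet_lt measurable_const measurable_snd).inter
        (measurableSet_le measurable_snd measurable_const)))
  -- the box
  set Box : Set (Fin m → ℝ) :=
    Set.pi Set.univ (fun i => Icc (z₀.1 i.castSucc - r) (z₀.1 i.castSucc + r)) with hBox
  have hBoxmeas : MeasurableSet Box := MeasurableSet.univ_pi fun i => measurableSet_Icc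
  have hBoxvol : volume Box = ENNReal.ofReal ((2*r)^m) := by
    rw [hBox, volume_pi_pi]
    have : ∀ i : Fin m, volume (Icc (z₀.1 i.castSucc - r) (z₀.1 i.castSucc + r))
        = ENNReal.ofReal (2*r) := by
      intro i; rw [Real.volume_Icc]; congr 1; ring
    simp only [this, Finset.prod_const, Finset.card_univ, Fintype.card_fin]
    rw [← ENNReal.ofReal_pow (by positivity)]
  have hBoxmem : ∀ y : Fin m → ℝ, y ∈ Box ↔ ∀ i, |y i - z₀.1 i.castSucc| ≤ r := by
    intro y
    rw [hBox, Set.mem_univ_pi]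
    constructor
    · intro h i
      obtain ⟨h1, h2⟩ := h i
      rw [abs_le]; constructor <;> linarith
    · intro h i
      have := abs_le.mp (h i)
      constructor <;> [linarith [this.1]; linarith [this.2]]
  -- slice bound
  have claimA : ∀ t : ℝ,
      volume {x : EuclideanSpace ℝ (Fin (m+1)) |
        (∀ i : Fin m, |x i.castSucc - z₀.1 i.castSucc| ≤ r) ∧
        (φ (prj x, t) < x (Fin.last m) ∧ x (Fin.last m) ≤ φ (prj x, t) + L)} ≤
      ENNReal.ofReal ((2*r)^m * L) := by
    intro t
    set gt : (Fin m → ℝ) → ℝ := fun y => φ (y, t) with hgt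
    have hgtc : Continuous gt := hφc.comp (continuous_id.prodMk continuous_const)
    set D : Set (ℝ × (Fin m → ℝ)) :=
      {q | (∀ i, |q.2 i - z₀.1 i.castSucc| ≤ r) ∧ (gt q.2 < q.1 ∧ q.1 ≤ gt q.2 + L)} with hD
    have hD1meas : MeasurableSet {q : ℝ × (Fin m → ℝ) |
        ∀ i : Fin m, |q.2 i - z₀.1 i.castSucc| ≤ r} := by
      rw [Set.setOf_forall]
      exact MeasurableSet.iInter fun i => measurableSet_le
        (((measurable_pi_apply i).comp measurable_snd).sub measurable_const).abs
        measurable_const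
    have hDmeas : MeasurableSet D := by
      exact hD1meas.inter
        ((measurableSet_lt (hgtc.measurable.comp measurable_snd) measurable_fst).inter
         (measurableSet_le measurable_fst
           ((hgtc.measurable.comp measurable_snd).add measurable_const)))
    have hAD : {x : EuclideanSpace ℝ (Fin (m+1)) |
        (∀ i : Fin m, |x i.castSucc - z₀.1 i.castSucc| ≤ r) ∧
        (φ (prj x, t) < x (Fin.last m) ∧ x (Fin.last m) ≤ φ (prj x, t) + L)} =
        (MeasurableEquiv.toLp 2 (Fin (m+1) → ℝ)).symm ⁻¹'
          ((MeasurableEquiv.piFinSuccAbove (fun _ => ℝ) (Fin.last m)) ⁻¹' D) := by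
      ext x
      simp only [Set.mem_preimage, aux_equiv_apply m x, hD, Set.mem_setOf_eq]
      exact Iff.rfl
    rw [hAD,
      (EuclideanSpace.volume_preserving_symm_measurableEquiv_toLp (Fin (m+1))).measure_preimage
        ((hDmeas.preimage (MeasurableEquiv.piFinSuccAbove (fun _ => ℝ)
          (Fin.last m)).measurable).nullMeasurableSet),
      (volume_preserving_piFinSuccAbove (fun _ => ℝ) (Fin.last m)).measure_preimage
        hDmeas.nullMeasurableSet]
    rw [Measure.volume_eq_prod, Measure.prod_apply_symm hDmeas]
    have hslice : ∀ y : Fin m → ℝ,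
        volume ((fun x : ℝ => (x, y)) ⁻¹' D) = Box.indicator (fun _ => ENNReal.ofReal L) y := by
      intro y
      by_cases hy : y ∈ Box
      · have hys := (hBoxmem y).mp hy
        have : (fun x : ℝ => (x, y)) ⁻¹' D = Ioc (gt y) (gt y + L) := by
          ext x
          simp only [Set.mem_preimage, hD, Set.mem_setOf_eq, Set.mem_Ioc]
          exact ⟨fun h => h.2, fun h => ⟨hys, h⟩⟩
        rw [this, Real.volume_Ioc, Set.indicator_of_mem hy, add_sub_cancel_left]
      · have : (fun x : ℝ => (x, y)) ⁻¹' D = ∅ := by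
          ext x
          simp only [Set.mem_preimage, hD, Set.mem_setOf_eq, Set.mem_empty_iff_false, iff_false]
          intro h
          exact hy ((hBoxmem y).mpr h.1)
        rw [this, Set.indicator_of_notMem hy]
        simp
    rw [lintegral_congr hslice, lintegral_indicator hBoxmeas, setLIntegral_const, hBoxvol,
      ← ENNReal.ofReal_mul hL.le]
    rw [mul_comm L ((2*r)^m)]
  -- put it together
  calc volume {z ∈ graphDomain m φ ∩ pCyl z₀ r | pdistToSet z (graphBoundary m φ) ≤ d}
      ≤ volume T := measure_mono hST
    _ = ∫⁻ t, volume ((fun x => (x, t)) ⁻¹' T) := by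
        rw [Measure.volume_eq_prod, Measure.prod_apply_symm hTmeas]
    _ ≤ ∫⁻ t, (Ioc (z₀.2 - r^2) z₀.2).indicator (fun _ => ENNReal.ofReal ((2*r)^m * L)) t := by
        apply lintegral_mono
        intro t
        show volume ((fun x => (x, t)) ⁻¹' T) ≤
          (Ioc (z₀.2 - r^2) z₀.2).indicator (fun _ => ENNReal.ofReal ((2*r)^m * L)) t
        by_cases ht : t ∈ Ioc (z₀.2 - r^2) z₀.2
        · rw [Set.indicator_of_mem ht]
          refine le_trans (measure_mono ?_) (claimA t)
          rintro x ⟨h1, h2, _⟩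
          exact ⟨h1, h2⟩
        · rw [Set.indicator_of_notMem ht]
          have : (fun x => (x, t)) ⁻¹' T = ∅ := by
            ext x
            simp only [Set.mem_preimage, hT, Set.mem_setOf_eq, Set.mem_empty_iff_false, iff_false]
            rintro ⟨_, _, h3⟩
            exact ht h3
          rw [this]; simp
    _ = ENNReal.ofReal ((2*r)^m * L) * volume (Ioc (z₀.2 - r^2) z₀.2) := by
        rw [lintegral_indicator measurableSet_Ioc, setLIntegral_const]
    _ ≤ ENNReal.ofReal (2 ^ m * (1 + K₀) * r ^ (m + 2) * d) := by
        rw [Real.volume_Ioc, ← ENNReal.ofReal_mul (by positivity)]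
        apply ENNReal.ofReal_le_ofReal
        apply le_of_eq
        rw [hLdef]
        ring
end

section
/- Summability of Whitney cube diameters near a Lipschitz boundary (Lemma 4.3): For every n ≥ 1, K₀ > 0, C₀ ≥ 1 and q > n+1 there is C > 0 depending only on n, q, K₀, C₀ such that the following holds. Let φ : ℝ^{n−1}×ℝ → ℝ satisfy φ(0,0) = 0 and |φ(x',t) − φ(y',s)| ≤ K₀·(|x'−y'|²+|t−s|)^{1/2}, and set Ω := {(x',x_n,t) : x_n > φ(x',t)} and Γ := {(x',x_n,t) : x_n = φ(x',t)}. Let (Q_j) be a countable family of parabolic cubes with pairwise disjoint interiors such that each Q_j ⊂ Ω ∩ Q_{1/4} and C₀^{−1}·diam(Q_j) ≤ d_p(Q_j, Γ) ≤ C₀·diam(Q_j) for every j. Then Σ_j diam(Q_j)^q ≤ C. -/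
open MeasureTheory Set
open scoped ENNReal

-- aux lemmas
namespace Whitney

lemma sqrt_add_sq_le {u₁ u₂ τ₁ τ₂ : ℝ} (h1 : 0 ≤ u₁) (h2 : 0 ≤ u₂) (h3 : 0 ≤ τ₁) (h4 : 0 ≤ τ₂) :
    Real.sqrt ((u₁ + u₂) ^ 2 + (τ₁ + τ₂)) ≤ Real.sqrt (u₁ ^ 2 + τ₁) + Real.sqrt (u₂ ^ 2 + τ₂) := by
  have e1 : Real.sqrt (u₁ ^ 2 + τ₁) ^ 2 = u₁ ^ 2 + τ₁ := Real.sq_sqrt (by positivity)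
  have e2 : Real.sqrt (u₂ ^ 2 + τ₂) ^ 2 = u₂ ^ 2 + τ₂ := Real.sq_sqrt (by positivity)
  have l1 : u₁ ≤ Real.sqrt (u₁ ^ 2 + τ₁) := by
    have h := Real.sqrt_le_sqrt (show u₁ ^ 2 ≤ u₁ ^ 2 + τ₁ by linarith)
    rwa [Real.sqrt_sq h1] at h
  have l2 : u₂ ≤ Real.sqrt (u₂ ^ 2 + τ₂) := by
    have h := Real.sqrt_le_sqrt (show u₂ ^ 2 ≤ u₂ ^ 2 + τ₂ by linarith)
    rwa [Real.sqrt_sq h2] at h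
  have key : (u₁ + u₂) ^ 2 + (τ₁ + τ₂) ≤
      (Real.sqrt (u₁ ^ 2 + τ₁) + Real.sqrt (u₂ ^ 2 + τ₂)) ^ 2 := by
    have h5 : u₁ * u₂ ≤ Real.sqrt (u₁ ^ 2 + τ₁) * Real.sqrt (u₂ ^ 2 + τ₂) :=
      mul_le_mul l1 l2 h2 (Real.sqrt_nonneg _)
    nlinarith
  calc Real.sqrt ((u₁ + u₂) ^ 2 + (τ₁ + τ₂))
      ≤ Real.sqrt ((Real.sqrt (u₁ ^ 2 + τ₁) + Real.sqrt (u₂ ^ 2 + τ₂)) ^ 2) :=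
        Real.sqrt_le_sqrt key
    _ = _ := Real.sqrt_sq (by positivity)

lemma pdist_nonneg {n : ℕ} (z w : Pt n) : 0 ≤ pdist z w := Real.sqrt_nonneg _

lemma norm_sq_eq {n : ℕ} (v : EuclideanSpace ℝ (Fin n)) : ‖v‖ ^ 2 = ∑ i, v i ^ 2 := by
  rw [EuclideanSpace.norm_eq]
  rw [show (∑ i, ‖v i‖ ^ 2) = ∑ i, v i ^ 2 from
    Finset.sum_congr rfl fun i _ => by rw [Real.norm_eq_abs, sq_abs]]
  exact Real.sq_sqrt (by positivity)

lemma abs_coord_le_norm {n : ℕ} (v : EuclideanSpace ℝ (Fin n)) (i : Fin n) : |v i| ≤ ‖v‖ := by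
  have h : v i ^ 2 ≤ ‖v‖ ^ 2 := by
    rw [norm_sq_eq]
    exact Finset.single_le_sum (f := fun j => v j ^ 2) (fun j _ => sq_nonneg _) (Finset.mem_univ i)
  calc |v i| = Real.sqrt (v i ^ 2) := (Real.sqrt_sq_eq_abs _).symm
    _ ≤ Real.sqrt (‖v‖ ^ 2) := Real.sqrt_le_sqrt h
    _ = ‖v‖ := Real.sqrt_sq (norm_nonneg _)

lemma pdist_triangle {n : ℕ} (z a w : Pt n) : pdist z w ≤ pdist z a + pdist a w := by
  unfold pdist
  have hn : ‖z.1 - w.1‖ ≤ ‖z.1 - a.1‖ + ‖a.1 - w.1‖ := by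
    have h : z.1 - w.1 = (z.1 - a.1) + (a.1 - w.1) := by abel
    rw [h]; exact norm_add_le _ _
  have ht : |z.2 - w.2| ≤ |z.2 - a.2| + |a.2 - w.2| := abs_sub_le _ _ _
  have step1 : Real.sqrt (‖z.1 - w.1‖ ^ 2 + |z.2 - w.2|) ≤
      Real.sqrt ((‖z.1 - a.1‖ + ‖a.1 - w.1‖) ^ 2 + (|z.2 - a.2| + |a.2 - w.2|)) := by
    apply Real.sqrt_le_sqrt
    have h2 := pow_le_pow_left₀ (norm_nonneg (z.1 - w.1)) hn 2
    linarith
  exact step1.trans (sqrt_add_sq_le (norm_nonneg _) (norm_nonneg _) (abs_nonneg _) (abs_nonneg _))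

end Whitney
namespace Whitney

lemma center_mem {n : ℕ} (Q : PCube n) : Q.center ∈ Q.toSet := by
  refine ⟨fun i => ?_, ?_⟩ <;> simp [Q.half_pos.le, sq_nonneg Q.half]

lemma pdist_le_of_mem {n : ℕ} (Q : PCube n) {z w : Pt n}
    (hz : z ∈ Q.toSet) (hw : w ∈ Q.toSet) :
    pdist z w ≤ Real.sqrt (4 * n + 2) * Q.half := by
  obtain ⟨hz1, hz2⟩ := hz
  obtain ⟨hw1, hw2⟩ := hw
  unfold pdist
  have hsum : ‖z.1 - w.1‖ ^ 2 ≤ (n : ℝ) * (2 * Q.half) ^ 2 := by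
    rw [norm_sq_eq]
    calc ∑ i, (z.1 - w.1) i ^ 2 ≤ ∑ _i : Fin n, (2 * Q.half) ^ 2 := by
          refine Finset.sum_le_sum fun i _ => ?_
          have habs : |(z.1 - w.1) i| ≤ 2 * Q.half := by
            have h1 := hz1 i; have h2 := hw1 i
            have he : (z.1 - w.1) i = (z.1 i - Q.center.1 i) - (w.1 i - Q.center.1 i) := by
              simp
            rw [he]
            calc |(z.1 i - Q.center.1 i) - (w.1 i - Q.center.1 i)|
                ≤ |z.1 i - Q.center.1 i| + |w.1 i - Q.center.1 i| := abs_sub _ _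
              _ ≤ 2 * Q.half := by linarith
          calc (z.1 - w.1) i ^ 2 = |(z.1 - w.1) i| ^ 2 := (sq_abs _).symm
            _ ≤ (2 * Q.half) ^ 2 := pow_le_pow_left₀ (abs_nonneg _) habs 2
      _ = (n : ℝ) * (2 * Q.half) ^ 2 := by
          rw [Finset.sum_const, Finset.card_univ, Fintype.card_fin, nsmul_eq_mul]
  have htime : |z.2 - w.2| ≤ 2 * Q.half ^ 2 := by
    have he : z.2 - w.2 = (z.2 - Q.center.2) - (w.2 - Q.center.2) := by ring
    rw [he]
    calc |(z.2 - Q.center.2) - (w.2 - Q.center.2)|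
        ≤ |z.2 - Q.center.2| + |w.2 - Q.center.2| := abs_sub _ _
      _ ≤ 2 * Q.half ^ 2 := by linarith
  calc Real.sqrt (‖z.1 - w.1‖ ^ 2 + |z.2 - w.2|)
      ≤ Real.sqrt ((4 * n + 2) * Q.half ^ 2) := by
        apply Real.sqrt_le_sqrt; nlinarith [sq_nonneg Q.half]
    _ = Real.sqrt (4 * n + 2) * Q.half := by
        rw [Real.sqrt_mul (by positivity), Real.sqrt_sq Q.half_pos.le]

lemma pdiam_cube_le {n : ℕ} (Q : PCube n) : pdiam Q.toSet ≤ Real.sqrt (4 * n + 2) * Q.half := by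
  apply Real.sSup_le ?_ (mul_nonneg (Real.sqrt_nonneg _) Q.half_pos.le)
  rintro d ⟨z, hz, w, hw, rfl⟩
  exact pdist_le_of_mem Q hz hw

lemma bddAbove_cube {n : ℕ} (Q : PCube n) : BddAbove (Set.image2 pdist Q.toSet Q.toSet) := by
  refine ⟨Real.sqrt (4 * n + 2) * Q.half, ?_⟩
  rintro d ⟨z, hz, w, hw, rfl⟩
  exact pdist_le_of_mem Q hz hw

lemma pdist_le_pdiam {n : ℕ} (Q : PCube n) {z w : Pt n}
    (hz : z ∈ Q.toSet) (hw : w ∈ Q.toSet) : pdist z w ≤ pdiam Q.toSet :=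
  le_csSup (bddAbove_cube Q) (Set.mem_image2_of_mem hz hw)

lemma two_half_le_pdiam {m : ℕ} (Q : PCube (m + 1)) : 2 * Q.half ≤ pdiam Q.toSet := by
  set i₀ : Fin (m + 1) := Fin.last m
  set s := EuclideanSpace.single i₀ Q.half with hs
  set zp : Pt (m + 1) := (Q.center.1 + s, Q.center.2) with hzp
  set zm : Pt (m + 1) := (Q.center.1 - s, Q.center.2) with hzm
  have hmemp : zp ∈ Q.toSet := by
    refine ⟨fun i => ?_, by simpa [hzp] using sq_nonneg Q.half⟩
    have : (Q.center.1 + s) i - Q.center.1 i = s i := by simp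
    rw [hzp, this, hs, EuclideanSpace.single_apply]
    split <;> simp [abs_of_nonneg Q.half_pos.le, Q.half_pos.le]
  have hmemm : zm ∈ Q.toSet := by
    refine ⟨fun i => ?_, by simpa [hzm] using sq_nonneg Q.half⟩
    have : (Q.center.1 - s) i - Q.center.1 i = -s i := by simp
    rw [hzm, this, hs, EuclideanSpace.single_apply, abs_neg]
    split <;> simp [abs_of_nonneg Q.half_pos.le, Q.half_pos.le]
  have hd : pdist zp zm = 2 * Q.half := by
    have h1 : zp.1 - zm.1 = (2 : ℝ) • s := by
      show (Q.center.1 + s) - (Q.center.1 - s) = (2 : ℝ) • s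
      rw [two_smul]; abel
    have h2 : ‖zp.1 - zm.1‖ = 2 * Q.half := by
      rw [h1, norm_smul, hs, EuclideanSpace.norm_single]
      simp [abs_of_nonneg Q.half_pos.le]
    have h3 : zp.2 - zm.2 = 0 := by show Q.center.2 - Q.center.2 = 0; ring
    unfold pdist
    rw [h2, h3, abs_zero, add_zero, Real.sqrt_sq (mul_nonneg (by norm_num) Q.half_pos.le)]
  calc 2 * Q.half = pdist zp zm := hd.symm
    _ ≤ pdiam Q.toSet := pdist_le_pdiam Q hmemp hmemm

end Whitney
namespace Whitney

lemma volume_pt_prod {n : ℕ} (A : Set (EuclideanSpace ℝ (Fin n))) (B : Set ℝ) :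
    volume {z : Pt n | z.1 ∈ A ∧ z.2 ∈ B} = volume A * volume B := by
  have h : {z : Pt n | z.1 ∈ A ∧ z.2 ∈ B} = A ×ˢ B := rfl
  rw [h, Measure.volume_eq_prod, Measure.prod_prod]

lemma volume_eucl_Icc {n : ℕ} (c : Fin n → ℝ) (r : ℝ) :
    volume {x : EuclideanSpace ℝ (Fin n) | ∀ i, |x i - c i| ≤ r} =
      (ENNReal.ofReal (2 * r)) ^ n := by
  have hA : {x : EuclideanSpace ℝ (Fin n) | ∀ i, |x i - c i| ≤ r} =
      (@WithLp.ofLp 2 (Fin n → ℝ)) ⁻¹'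
        (Set.univ.pi fun i => Set.Icc (c i - r) (c i + r)) := by
    ext x
    simp only [Set.mem_setOf_eq, Set.mem_preimage, Set.mem_pi, Set.mem_univ, forall_true_left,
      Set.mem_Icc, true_implies]
    constructor
    · intro h i
      have := abs_le.mp (h i); constructor <;> linarith [this.1, this.2]
    · intro h i
      rw [abs_le]; have := h i; constructor <;> linarith [this.1, this.2]
  rw [hA, (PiLp.volume_preserving_ofLp (Fin n)).measure_preimage
    (MeasurableSet.univ_pi fun i => measurableSet_Icc).nullMeasurableSet]
  rw [volume_pi_pi]
  have : ∀ i : Fin n, volume (Set.Icc (c i - r) (c i + r)) = ENNReal.ofReal (2 * r) := by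
    intro i; rw [Real.volume_Icc]; congr 1; ring
  simp only [this, Finset.prod_const, Finset.card_univ, Fintype.card_fin]

lemma volume_eucl_Ioo {n : ℕ} (c : Fin n → ℝ) (r : ℝ) :
    volume {x : EuclideanSpace ℝ (Fin n) | ∀ i, |x i - c i| < r} =
      (ENNReal.ofReal (2 * r)) ^ n := by
  have hA : {x : EuclideanSpace ℝ (Fin n) | ∀ i, |x i - c i| < r} =
      (@WithLp.ofLp 2 (Fin n → ℝ)) ⁻¹'
        (Set.univ.pi fun i => Set.Ioo (c i - r) (c i + r)) := by
    ext x
    simp only [Set.mem_setOf_eq, Set.mem_preimage, Set.mem_pi, Set.mem_univ, forall_true_left,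
      Set.mem_Ioo, true_implies]
    constructor
    · intro h i
      have := abs_lt.mp (h i); constructor <;> linarith [this.1, this.2]
    · intro h i
      rw [abs_lt]; have := h i; constructor <;> linarith [this.1, this.2]
  rw [hA, (PiLp.volume_preserving_ofLp (Fin n)).measure_preimage
    (MeasurableSet.univ_pi fun i => measurableSet_Ioo).nullMeasurableSet]
  rw [volume_pi_pi]
  have : ∀ i : Fin n, volume (Set.Ioo (c i - r) (c i + r)) = ENNReal.ofReal (2 * r) := by
    intro i; rw [Real.volume_Ioo]; congr 1; ring
  simp only [this, Finset.prod_const, Finset.card_univ, Fintype.card_fin]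

/-- volume of the open parabolic cube -/
lemma volume_open_cube {n : ℕ} (c : Pt n) (r : ℝ) :
    volume {z : Pt n | (∀ i, |z.1 i - c.1 i| < r) ∧ |z.2 - c.2| < r ^ 2} =
      (ENNReal.ofReal (2 * r)) ^ n * ENNReal.ofReal (2 * r ^ 2) := by
  have h := volume_pt_prod {x : EuclideanSpace ℝ (Fin n) | ∀ i, |x i - c.1 i| < r}
    (Set.Ioo (c.2 - r ^ 2) (c.2 + r ^ 2))
  have he : {z : Pt n | (∀ i, |z.1 i - c.1 i| < r) ∧ |z.2 - c.2| < r ^ 2} =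
      {z : Pt n | z.1 ∈ {x : EuclideanSpace ℝ (Fin n) | ∀ i, |x i - c.1 i| < r} ∧
        z.2 ∈ Set.Ioo (c.2 - r ^ 2) (c.2 + r ^ 2)} := by
    ext z
    simp only [Set.mem_setOf_eq, Set.mem_Ioo]
    constructor
    · rintro ⟨h1, h2⟩
      have := abs_lt.mp h2
      exact ⟨h1, by linarith [this.1], by linarith [this.2]⟩
    · rintro ⟨h1, h2, h3⟩
      exact ⟨h1, abs_lt.mpr ⟨by linarith, by linarith⟩⟩
  rw [he, h, volume_eucl_Ioo, Real.volume_Ioo]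
  congr 1
  congr 1
  ring

/-- volume of the closed box -/
lemma volume_closed_box {n : ℕ} (M : ℝ) :
    volume {z : Pt n | (∀ i, |z.1 i| ≤ M) ∧ |z.2| ≤ 1} =
      (ENNReal.ofReal (2 * M)) ^ n * ENNReal.ofReal 2 := by
  have h := volume_pt_prod {x : EuclideanSpace ℝ (Fin n) | ∀ i, |x i - (0:ℝ)| ≤ M}
    (Set.Icc (-1 : ℝ) 1)
  have he : {z : Pt n | (∀ i, |z.1 i| ≤ M) ∧ |z.2| ≤ 1} =
      {z : Pt n | z.1 ∈ {x : EuclideanSpace ℝ (Fin n) | ∀ i, |x i - (0:ℝ)| ≤ M} ∧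
        z.2 ∈ Set.Icc (-1 : ℝ) 1} := by
    ext z
    simp only [Set.mem_setOf_eq, sub_zero, Set.mem_Icc, abs_le]
  rw [he, h, volume_eucl_Icc (fun _ => (0:ℝ)), Real.volume_Icc]
  norm_num

end Whitney
namespace Whitney

variable {m : ℕ}

/-- the height function above the graph -/
def gfun (φ : (Fin m → ℝ) × ℝ → ℝ) (z : Pt (m + 1)) : ℝ :=
  z.1 (Fin.last m) - φ (fun i => z.1 i.castSucc, z.2)

/-- the strip set -/
def Eset (φ : (Fin m → ℝ) × ℝ → ℝ) (a b : ℝ) : Set (Pt (m + 1)) :=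
  {z | (∀ i : Fin m, |z.1 i.castSucc| ≤ 1) ∧ |z.2| ≤ 1 ∧ a < gfun φ z ∧ gfun φ z ≤ b}

lemma continuous_phi {K₀ : ℝ} {φ : (Fin m → ℝ) × ℝ → ℝ}
    (hL : ∀ a b : (Fin m → ℝ) × ℝ,
      |φ a - φ b| ≤ K₀ * Real.sqrt ((∑ i, (a.1 i - b.1 i) ^ 2) + |a.2 - b.2|)) :
    Continuous φ := by
  rw [continuous_iff_continuousAt]
  intro b
  have hc : Continuous (fun a : (Fin m → ℝ) × ℝ =>
      K₀ * Real.sqrt ((∑ i, (a.1 i - b.1 i) ^ 2) + |a.2 - b.2|)) := by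
    apply Continuous.mul continuous_const
    apply Real.continuous_sqrt.comp
    apply Continuous.add
    · exact continuous_finset_sum _ fun i _ =>
        (((continuous_apply i).comp continuous_fst).sub continuous_const).pow 2
    · exact continuous_abs.comp (continuous_snd.sub continuous_const)
  have h0 : Filter.Tendsto (fun a : (Fin m → ℝ) × ℝ =>
      K₀ * Real.sqrt ((∑ i, (a.1 i - b.1 i) ^ 2) + |a.2 - b.2|)) (nhds b) (nhds 0) := by
    have := hc.tendsto b
    simpa using this
  have hzero : Filter.Tendsto (fun a => φ a - φ b) (nhds b) (nhds 0) :=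
    squeeze_zero_norm (fun a => by simpa [Real.norm_eq_abs] using hL a b) h0
  have := hzero.add_const (φ b)
  simpa [ContinuousAt] using this

lemma continuous_gfun {K₀ : ℝ} {φ : (Fin m → ℝ) × ℝ → ℝ}
    (hL : ∀ a b : (Fin m → ℝ) × ℝ,
      |φ a - φ b| ≤ K₀ * Real.sqrt ((∑ i, (a.1 i - b.1 i) ^ 2) + |a.2 - b.2|)) :
    Continuous (gfun φ) := by
  have hproj : ∀ i : Fin (m + 1), Continuous fun z : Pt (m + 1) => z.1 i := fun i =>
    (EuclideanSpace.proj i).continuous.comp continuous_fst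
  apply Continuous.sub (hproj (Fin.last m))
  exact (continuous_phi hL).comp
    ((continuous_pi fun (i : Fin m) => hproj i.castSucc).prodMk continuous_snd)

lemma measurable_Eset {K₀ : ℝ} {φ : (Fin m → ℝ) × ℝ → ℝ}
    (hL : ∀ a b : (Fin m → ℝ) × ℝ,
      |φ a - φ b| ≤ K₀ * Real.sqrt ((∑ i, (a.1 i - b.1 i) ^ 2) + |a.2 - b.2|))
    (a b : ℝ) : MeasurableSet (Eset φ a b) := by
  have hproj : ∀ i : Fin (m + 1), Continuous fun z : Pt (m + 1) => z.1 i := fun i =>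
    (EuclideanSpace.proj i).continuous.comp continuous_fst
  have h1 : Eset φ a b = (⋂ i : Fin m, {z : Pt (m + 1) | |z.1 i.castSucc| ≤ 1}) ∩
      ({z : Pt (m + 1) | |z.2| ≤ 1} ∩ (gfun φ) ⁻¹' (Set.Ioc a b)) := by
    ext z
    simp only [Eset, Set.mem_setOf_eq, Set.mem_inter_iff, Set.mem_iInter, Set.mem_preimage,
      Set.mem_Ioc]
  rw [h1]
  refine MeasurableSet.inter (MeasurableSet.iInter fun i => ?_)
    (MeasurableSet.inter ?_ ((continuous_gfun hL).measurable measurableSet_Ioc))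
  · have : {z : Pt (m + 1) | |z.1 i.castSucc| ≤ 1} =
        (fun z : Pt (m + 1) => z.1 i.castSucc) ⁻¹' (Set.Icc (-1) 1) := by
      ext z; simp [abs_le]
    rw [this]; exact (hproj i.castSucc).measurable measurableSet_Icc
  · have : {z : Pt (m + 1) | |z.2| ≤ 1} =
        (fun z : Pt (m + 1) => z.2) ⁻¹' (Set.Icc (-1) 1) := by
      ext z; simp [abs_le]
    rw [this]; exact continuous_snd.measurable measurableSet_Icc

lemma Eset_translate (φ : (Fin m → ℝ) × ℝ → ℝ) (a b s : ℝ) :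
    volume (Eset φ (a + s) (b + s)) = volume (Eset φ a b) := by
  set v : Pt (m + 1) := (EuclideanSpace.single (Fin.last m) s, 0) with hv
  have hpre : (fun z : Pt (m + 1) => v + z) ⁻¹' (Eset φ (a + s) (b + s)) = Eset φ a b := by
    ext z
    have hco : ∀ i : Fin m, (v + z).1 i.castSucc = z.1 i.castSucc := by
      intro i
      have hne : i.castSucc ≠ Fin.last m := (Fin.castSucc_lt_last i).ne
      simp [hv, EuclideanSpace.single_apply, hne]
    have ht : (v + z).2 = z.2 := by simp [hv]
    have hg : gfun φ (v + z) = gfun φ z + s := by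
      unfold gfun
      have h1 : (v + z).1 (Fin.last m) = s + z.1 (Fin.last m) := by
        simp [hv, EuclideanSpace.single_apply]
      have h2 : (fun i : Fin m => (v + z).1 i.castSucc) = fun i => z.1 i.castSucc :=
        funext hco
      rw [h1, h2, ht]; ring
    simp only [Set.mem_preimage, Eset, Set.mem_setOf_eq, hg, ht, hco]
    constructor
    · rintro ⟨hc, h2, h3, h4⟩; exact ⟨hc, h2, by linarith, by linarith⟩
    · rintro ⟨hc, h2, h3, h4⟩; exact ⟨hc, h2, by linarith, by linarith⟩
  haveI : (volume : Measure (Pt (m + 1))).IsAddLeftInvariant := by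
    rw [Measure.volume_eq_prod]; infer_instance
  rw [← hpre]
  exact (measure_preimage_add volume v _).symm

end Whitney
namespace Whitney

lemma Eset_subset_box {m : ℕ} {K₀ : ℝ} {φ : (Fin m → ℝ) × ℝ → ℝ}
    (hφ0 : φ (0, 0) = 0)
    (hL : ∀ a b : (Fin m → ℝ) × ℝ,
      |φ a - φ b| ≤ K₀ * Real.sqrt ((∑ i, (a.1 i - b.1 i) ^ 2) + |a.2 - b.2|))
    (hK₀ : 0 ≤ K₀) {b M : ℝ} (hb : 0 ≤ b) (hM : b + K₀ * Real.sqrt (m + 1) ≤ M) (hM1 : 1 ≤ M) :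
    Eset φ 0 b ⊆ {z : Pt (m + 1) | (∀ i, |z.1 i| ≤ M) ∧ |z.2| ≤ 1} := by
  rintro z ⟨hc, ht, hg1, hg2⟩
  refine ⟨fun i => ?_, ht⟩
  refine Fin.lastCases ?_ (fun i => le_trans (hc i) hM1) i
  -- |z.1 (last)| ≤ M
  have hphi : |φ (fun i => z.1 i.castSucc, z.2)| ≤ K₀ * Real.sqrt (m + 1) := by
    have h := hL (fun i => z.1 i.castSucc, z.2) (0, 0)
    rw [hφ0, sub_zero] at h
    refine h.trans ?_
    apply mul_le_mul_of_nonneg_left ?_ hK₀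
    apply Real.sqrt_le_sqrt
    have hsum : (∑ i : Fin m, (z.1 i.castSucc - (0 : Fin m → ℝ) i) ^ 2) ≤ (m : ℝ) := by
      calc (∑ i : Fin m, (z.1 i.castSucc - (0 : Fin m → ℝ) i) ^ 2)
          ≤ ∑ _i : Fin m, (1 : ℝ) := by
            refine Finset.sum_le_sum fun i _ => ?_
            have := hc i
            have h1 : |z.1 i.castSucc - (0 : Fin m → ℝ) i| ≤ 1 := by
              simpa using this
            calc (z.1 i.castSucc - (0 : Fin m → ℝ) i) ^ 2
                = |z.1 i.castSucc - (0 : Fin m → ℝ) i| ^ 2 := (sq_abs _).symm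
              _ ≤ 1 ^ 2 := pow_le_pow_left₀ (abs_nonneg _) h1 2
              _ = 1 := one_pow 2
        _ = (m : ℝ) := by simp
    have habs : |z.2 - (0:ℝ)| ≤ 1 := by simpa using ht
    push_cast
    linarith
  have hzn : z.1 (Fin.last m) = gfun φ z + φ (fun i => z.1 i.castSucc, z.2) := by
    unfold gfun; ring
  have hgabs : |gfun φ z| ≤ b := abs_le.mpr ⟨by linarith, hg2⟩
  calc |z.1 (Fin.last m)| ≤ |gfun φ z| + |φ (fun i => z.1 i.castSucc, z.2)| := by
        rw [hzn]; exact abs_add_le _ _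
    _ ≤ b + K₀ * Real.sqrt (m + 1) := by linarith
    _ ≤ M := hM

lemma Ekey {m : ℕ} {K₀ : ℝ} {φ : (Fin m → ℝ) × ℝ → ℝ}
    (hφ0 : φ (0, 0) = 0)
    (hL : ∀ a b : (Fin m → ℝ) × ℝ,
      |φ a - φ b| ≤ K₀ * Real.sqrt ((∑ i, (a.1 i - b.1 i) ^ 2) + |a.2 - b.2|))
    (hK₀ : 0 ≤ K₀) {A δ : ℝ} (hA : 0 < A) (hδ : 0 < δ) (hδA : δ ≤ A) :
    volume (Eset φ 0 δ) ≤
      ENNReal.ofReal ((2 * (1 + A + K₀ * Real.sqrt (m + 1) + 1)) ^ (m + 1) * 2 * δ) := by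
  set M : ℝ := 1 + A + K₀ * Real.sqrt (m + 1) + 1 with hMdef
  set W : ℝ := (2 * M) ^ (m + 1) * 2 with hWdef
  have hMpos : 1 ≤ M := by
    have := Real.sqrt_nonneg ((m : ℝ) + 1)
    nlinarith
  have hWpos : 0 ≤ W := by positivity
  set N : ℕ := ⌈δ⁻¹⌉₊ with hNdef
  have hNpos : 0 < N := Nat.ceil_pos.mpr (by positivity)
  have hNR : (0 : ℝ) < N := by exact_mod_cast hNpos
  have hNge : δ⁻¹ ≤ (N : ℝ) := Nat.le_ceil _
  have hNlt : (N : ℝ) < δ⁻¹ + 1 := Nat.ceil_lt_add_one (by positivity)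
  have hNδ : (N : ℝ) * δ ≤ 1 + δ := by
    have h1 : (N : ℝ) * δ < (δ⁻¹ + 1) * δ := by
      exact mul_lt_mul_of_pos_right hNlt hδ
    have h2 : (δ⁻¹ + 1) * δ = 1 + δ := by field_simp
    linarith
  have hinvN : (N : ℝ)⁻¹ ≤ δ := by
    have h1 : (N : ℝ)⁻¹ ≤ (δ⁻¹)⁻¹ := by
      apply inv_anti₀ (by positivity) hNge
    rwa [inv_inv] at h1
  -- pieces
  have hpiece : ∀ j : ℕ, volume (Eset φ (j * δ) (j * δ + δ)) = volume (Eset φ 0 δ) := by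
    intro j
    have h := Eset_translate φ 0 δ (j * δ)
    rw [zero_add] at h
    rw [show (j : ℝ) * δ + δ = δ + j * δ by ring]
    exact h
  have hdisj : (↑(Finset.range N) : Set ℕ).PairwiseDisjoint
      (fun j : ℕ => Eset φ (j * δ) (j * δ + δ)) := by
    intro j _ k _ hjk
    apply Set.disjoint_left.mpr
    rintro z ⟨_, _, hg1, hg2⟩ ⟨_, _, hg3, hg4⟩
    rcases lt_or_gt_of_ne hjk with h | h
    · have : (j : ℝ) + 1 ≤ k := by exact_mod_cast h
      nlinarith
    · have : (k : ℝ) + 1 ≤ j := by exact_mod_cast h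
      nlinarith
  have hsub : ∀ j ∈ Finset.range N, Eset φ (j * δ) (j * δ + δ) ⊆
      {z : Pt (m + 1) | (∀ i, |z.1 i| ≤ M) ∧ |z.2| ≤ 1} := by
    intro j hj
    have hjN : (j : ℝ) ≤ (N : ℝ) - 1 := by
      have := Finset.mem_range.mp hj
      have : (j : ℝ) + 1 ≤ N := by exact_mod_cast this
      linarith
    have hsub1 : Eset φ (j * δ) (j * δ + δ) ⊆ Eset φ 0 ((N : ℝ) * δ) := by
      rintro z ⟨hc, ht, hg1, hg2⟩
      refine ⟨hc, ht, ?_, ?_⟩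
      · have : (0 : ℝ) ≤ (j : ℝ) * δ := by positivity
        linarith
      · nlinarith
    refine hsub1.trans (Eset_subset_box hφ0 hL hK₀ (by positivity) ?_ hMpos)
    have : (N : ℝ) * δ ≤ 1 + A := by linarith
    rw [hMdef]; linarith
  have hkey : (N : ℝ≥0∞) * volume (Eset φ 0 δ) ≤ ENNReal.ofReal W := by
    have hcount : ∑ j ∈ Finset.range N, volume (Eset φ (j * δ) (j * δ + δ)) =
        (N : ℝ≥0∞) * volume (Eset φ 0 δ) := by
      rw [Finset.sum_congr rfl fun j _ => hpiece j]
      simp [Finset.sum_const, nsmul_eq_mul]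
    have hunion : volume (⋃ j ∈ Finset.range N, Eset φ (j * δ) (j * δ + δ)) =
        ∑ j ∈ Finset.range N, volume (Eset φ (j * δ) (j * δ + δ)) :=
      measure_biUnion_finset hdisj fun j _ => measurable_Eset hL _ _
    calc (N : ℝ≥0∞) * volume (Eset φ 0 δ) =
        volume (⋃ j ∈ Finset.range N, Eset φ (j * δ) (j * δ + δ)) := by
          rw [hunion, hcount]
      _ ≤ volume {z : Pt (m + 1) | (∀ i, |z.1 i| ≤ M) ∧ |z.2| ≤ 1} :=
          measure_mono (Set.iUnion₂_subset hsub)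
      _ = (ENNReal.ofReal (2 * M)) ^ (m + 1) * ENNReal.ofReal 2 := volume_closed_box M
      _ = ENNReal.ofReal W := by
          rw [hWdef, ← ENNReal.ofReal_pow (by positivity), ← ENNReal.ofReal_mul (by positivity)]
  have hdiv : volume (Eset φ 0 δ) ≤ ENNReal.ofReal W / (N : ℝ≥0∞) := by
    rw [ENNReal.le_div_iff_mul_le (Or.inl (by exact_mod_cast hNpos.ne'))
      (Or.inl (ENNReal.natCast_ne_top N))]
    rw [mul_comm]
    exact hkey
  refine hdiv.trans ?_
  have h1 : ENNReal.ofReal W / (N : ℝ≥0∞) = ENNReal.ofReal (W / N) := by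
    rw [ENNReal.ofReal_div_of_pos hNR, ENNReal.ofReal_natCast]
  rw [h1]
  apply ENNReal.ofReal_le_ofReal
  calc W / N = W * (N : ℝ)⁻¹ := div_eq_mul_inv _ _
    _ ≤ W * δ := mul_le_mul_of_nonneg_left hinvN hWpos
    _ = (2 * M) ^ (m + 1) * 2 * δ := by rw [hWdef]

end Whitney
namespace Whitney

variable {m : ℕ}

lemma gamma_proj_mem (φ : (Fin m → ℝ) × ℝ → ℝ) (z : Pt (m + 1)) :
    ((z.1 + EuclideanSpace.single (Fin.last m)
        (φ (fun i => z.1 i.castSucc, z.2) - z.1 (Fin.last m)), z.2) : Pt (m + 1)) ∈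
      graphBoundary m φ := by
  simp only [graphBoundary, Set.mem_setOf_eq]
  have hco : (fun i : Fin m => (z.1 + EuclideanSpace.single (Fin.last m)
      (φ (fun i => z.1 i.castSucc, z.2) - z.1 (Fin.last m))) i.castSucc) =
      fun i : Fin m => z.1 i.castSucc := by
    funext i
    have hne : i.castSucc ≠ Fin.last m := (Fin.castSucc_lt_last i).ne
    simp [EuclideanSpace.single_apply, hne]
  rw [hco]
  have : (z.1 + EuclideanSpace.single (Fin.last m)
      (φ (fun i => z.1 i.castSucc, z.2) - z.1 (Fin.last m))) (Fin.last m) =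
      z.1 (Fin.last m) + (φ (fun i => z.1 i.castSucc, z.2) - z.1 (Fin.last m)) := by
    simp [EuclideanSpace.single_apply]
  rw [this]; ring

lemma pdist_gamma_proj (φ : (Fin m → ℝ) × ℝ → ℝ) (z : Pt (m + 1)) :
    pdist z ((z.1 + EuclideanSpace.single (Fin.last m)
        (φ (fun i => z.1 i.castSucc, z.2) - z.1 (Fin.last m)), z.2) : Pt (m + 1)) =
      |gfun φ z| := by
  unfold pdist
  have h1 : z.1 - (z.1 + EuclideanSpace.single (Fin.last m)
      (φ (fun i => z.1 i.castSucc, z.2) - z.1 (Fin.last m))) =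
      EuclideanSpace.single (Fin.last m) (z.1 (Fin.last m) - φ (fun i => z.1 i.castSucc, z.2)) := by
    have : z.1 (Fin.last m) - φ (fun i => z.1 i.castSucc, z.2) =
        -(φ (fun i => z.1 i.castSucc, z.2) - z.1 (Fin.last m)) := by ring
    rw [this]
    rw [show ∀ a : ℝ, EuclideanSpace.single (Fin.last m) (-a) =
      -EuclideanSpace.single (Fin.last m) a from fun a => by
        ext i; simp [EuclideanSpace.single_apply]; split <;> simp]
    abel
  rw [h1, EuclideanSpace.norm_single]
  simp only [sub_self, abs_zero, add_zero]
  rw [Real.norm_eq_abs, Real.sqrt_sq (abs_nonneg _)]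
  rfl

lemma gfun_le_pdist {K₀ : ℝ} {φ : (Fin m → ℝ) × ℝ → ℝ}
    (hL : ∀ a b : (Fin m → ℝ) × ℝ,
      |φ a - φ b| ≤ K₀ * Real.sqrt ((∑ i, (a.1 i - b.1 i) ^ 2) + |a.2 - b.2|))
    (hK₀ : 0 ≤ K₀) (z w : Pt (m + 1)) (hw : w ∈ graphBoundary m φ) :
    gfun φ z ≤ (1 + K₀) * pdist z w := by
  have hwn : w.1 (Fin.last m) = φ (fun i => w.1 i.castSucc, w.2) := hw
  have hnorm_le : ‖z.1 - w.1‖ ≤ pdist z w := by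
    have h := Real.sqrt_le_sqrt (le_add_of_nonneg_right (abs_nonneg (z.2 - w.2)) :
      ‖z.1 - w.1‖ ^ 2 ≤ ‖z.1 - w.1‖ ^ 2 + |z.2 - w.2|)
    rwa [Real.sqrt_sq (norm_nonneg _)] at h
  have h1 : |z.1 (Fin.last m) - w.1 (Fin.last m)| ≤ pdist z w := by
    have he : z.1 (Fin.last m) - w.1 (Fin.last m) = (z.1 - w.1) (Fin.last m) := by simp
    rw [he]
    exact (abs_coord_le_norm _ _).trans hnorm_le
  have h2 : |φ (fun i => w.1 i.castSucc, w.2) - φ (fun i => z.1 i.castSucc, z.2)| ≤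
      K₀ * pdist z w := by
    refine (hL _ _).trans (mul_le_mul_of_nonneg_left ?_ hK₀)
    unfold pdist
    apply Real.sqrt_le_sqrt
    have hs : (∑ i : Fin m, (w.1 i.castSucc - z.1 i.castSucc) ^ 2) ≤ ‖z.1 - w.1‖ ^ 2 := by
      rw [norm_sq_eq]
      have hterm : ∀ i : Fin m, (w.1 i.castSucc - z.1 i.castSucc) ^ 2 =
          ((z.1 - w.1) i.castSucc) ^ 2 := by
        intro i
        have he : (z.1 - w.1) i.castSucc = z.1 i.castSucc - w.1 i.castSucc := by simp
        rw [he]; ring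
      calc (∑ i : Fin m, (w.1 i.castSucc - z.1 i.castSucc) ^ 2)
          = ∑ i : Fin m, ((z.1 - w.1) i.castSucc) ^ 2 :=
            Finset.sum_congr rfl fun i _ => hterm i
        _ ≤ (∑ i : Fin m, ((z.1 - w.1) i.castSucc) ^ 2) + ((z.1 - w.1) (Fin.last m)) ^ 2 :=
            le_add_of_nonneg_right (sq_nonneg _)
        _ = ∑ j : Fin (m + 1), ((z.1 - w.1) j) ^ 2 :=
            (Fin.sum_univ_castSucc fun j => ((z.1 - w.1) j) ^ 2).symm
    have habs : |w.2 - z.2| = |z.2 - w.2| := abs_sub_comm _ _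
    simp only [habs]
    linarith
  have hgdecomp : gfun φ z = (z.1 (Fin.last m) - w.1 (Fin.last m)) +
      (φ (fun i => w.1 i.castSucc, w.2) - φ (fun i => z.1 i.castSucc, z.2)) := by
    unfold gfun; rw [hwn]; ring
  calc gfun φ z ≤ |z.1 (Fin.last m) - w.1 (Fin.last m)| +
        |φ (fun i => w.1 i.castSucc, w.2) - φ (fun i => z.1 i.castSucc, z.2)| := by
        rw [hgdecomp]; exact (le_abs_self _).trans (abs_add_le _ _)
    _ ≤ pdist z w + K₀ * pdist z w := add_le_add h1 h2
    _ = (1 + K₀) * pdist z w := by ring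

lemma zero_mem_gamma {φ : (Fin m → ℝ) × ℝ → ℝ} (hφ0 : φ (0, 0) = 0) :
    (0 : Pt (m + 1)) ∈ graphBoundary m φ := by
  simp only [graphBoundary, Set.mem_setOf_eq]
  have harg : ((fun i : Fin m => (0 : Pt (m + 1)).1 i.castSucc, (0 : Pt (m + 1)).2) :
      (Fin m → ℝ) × ℝ) = (0, 0) := rfl
  rw [harg, hφ0]
  rfl

lemma open_cube_isOpen {n : ℕ} (c : Pt n) (r s : ℝ) :
    IsOpen {z : Pt n | (∀ i, |z.1 i - c.1 i| < r) ∧ |z.2 - c.2| < s} := by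
  have hproj : ∀ i : Fin n, Continuous fun z : Pt n => z.1 i := fun i =>
    (EuclideanSpace.proj i).continuous.comp continuous_fst
  have h : {z : Pt n | (∀ i, |z.1 i - c.1 i| < r) ∧ |z.2 - c.2| < s} =
      (⋂ i : Fin n, (fun z : Pt n => z.1 i) ⁻¹' Metric.ball (c.1 i) r) ∩
        ((fun z : Pt n => z.2) ⁻¹' Metric.ball c.2 s) := by
    ext z
    simp only [Set.mem_setOf_eq, Set.mem_inter_iff, Set.mem_iInter, Set.mem_preimage,
      Metric.mem_ball, Real.dist_eq]
  rw [h]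
  exact IsOpen.inter (isOpen_iInter_of_finite fun i => Metric.isOpen_ball.preimage (hproj i))
    (Metric.isOpen_ball.preimage continuous_snd)

lemma cube_half_lt (Q : PCube (m + 1)) (h : Q.toSet ⊆ pCyl (0 : Pt (m + 1)) (1 / 4)) :
    Q.half < 1 / 4 := by
  set i₀ : Fin (m + 1) := Fin.last m
  set s := EuclideanSpace.single i₀ Q.half with hs
  have hmemp : ((Q.center.1 + s, Q.center.2) : Pt (m + 1)) ∈ Q.toSet := by
    refine ⟨fun i => ?_, by simpa using sq_nonneg Q.half⟩
    have he : (Q.center.1 + s) i - Q.center.1 i = s i := by simp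
    rw [he, hs, EuclideanSpace.single_apply]
    split <;> simp [abs_of_nonneg Q.half_pos.le, Q.half_pos.le]
  have hmemm : ((Q.center.1 - s, Q.center.2) : Pt (m + 1)) ∈ Q.toSet := by
    refine ⟨fun i => ?_, by simpa using sq_nonneg Q.half⟩
    have he : (Q.center.1 - s) i - Q.center.1 i = -s i := by simp
    rw [he, hs, EuclideanSpace.single_apply, abs_neg]
    split <;> simp [abs_of_nonneg Q.half_pos.le, Q.half_pos.le]
  have h1 := (h hmemp).1
  have h2 := (h hmemm).1
  have h01 : ((0 : Pt (m + 1)).1 : EuclideanSpace ℝ (Fin (m + 1))) = 0 := rfl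
  rw [h01, sub_zero] at h1 h2
  have hdiff : ‖(Q.center.1 + s) - (Q.center.1 - s)‖ = 2 * Q.half := by
    have he : (Q.center.1 + s) - (Q.center.1 - s) = (2 : ℝ) • s := by
      rw [two_smul]; abel
    rw [he, norm_smul, hs, EuclideanSpace.norm_single]
    simp [abs_of_nonneg Q.half_pos.le]
  have htri : ‖(Q.center.1 + s) - (Q.center.1 - s)‖ ≤
      ‖Q.center.1 + s‖ + ‖Q.center.1 - s‖ := norm_sub_le _ _
  rw [hdiff] at htri
  linarith

lemma exists_dyadic {r : ℝ} (h0 : 0 < r) (h1 : r ≤ 1) :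
    ∃ k : ℕ, (2 : ℝ)⁻¹ ^ (k + 1) < r ∧ r ≤ (2 : ℝ)⁻¹ ^ k := by
  have hex : ∃ k : ℕ, (2 : ℝ)⁻¹ ^ (k + 1) < r := by
    obtain ⟨k, hk⟩ := exists_pow_lt_of_lt_one h0 (by norm_num : (2 : ℝ)⁻¹ < 1)
    refine ⟨k, lt_of_le_of_lt ?_ hk⟩
    apply pow_le_pow_of_le_one (by norm_num) (by norm_num)
    omega
  classical
  refine ⟨Nat.find hex, Nat.find_spec hex, ?_⟩
  rcases Nat.eq_zero_or_pos (Nat.find hex) with h | h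
  · rw [h]; simpa using h1
  · have hmin := Nat.find_min hex (Nat.pred_lt h.ne')
    rw [not_lt] at hmin
    have he : (Nat.find hex).pred + 1 = Nat.find hex := Nat.succ_pred_eq_of_pos h
    rwa [he] at hmin

end Whitney
open Whitney in
set_option maxHeartbeats 1000000 in
/-- **Summability of Whitney cube diameters near a Lipschitz boundary** (Lemma 4.3): if a
countable family of parabolic cubes with pairwise disjoint interiors lies in `Ω ∩ Q_{1/4}`
and each cube is Whitney-comparable to its distance from the lateral boundary `Γ`, then
`Σ_j diam(Q_j)^q ≤ C` for any `q > n + 1`.  Here `n = m + 1 ≥ 1`. -/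
theorem whitney_diam_sum
    (m : ℕ) (K₀ C₀ q : ℝ) (hK₀ : 0 < K₀) (hC₀ : 1 ≤ C₀) (hq : (m : ℝ) + 2 < q) :
    ∃ C : ℝ, 0 < C ∧
      ∀ (φ : (Fin m → ℝ) × ℝ → ℝ),
        φ (0, 0) = 0 →
        (∀ a b : (Fin m → ℝ) × ℝ,
          |φ a - φ b| ≤ K₀ * Real.sqrt ((∑ i, (a.1 i - b.1 i) ^ 2) + |a.2 - b.2|)) →
        ∀ (ι : Type) (_ : Countable ι) (Q : ι → PCube (m + 1)),
          (∀ j, (Q j).toSet ⊆ graphDomain m φ ∩ pCyl (0 : Pt (m + 1)) (1 / 4)) →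
          (∀ j k, j ≠ k → interior (Q j).toSet ∩ interior (Q k).toSet = ∅) →
          (∀ j, C₀⁻¹ * pdiam (Q j).toSet ≤ psetDist (Q j).toSet (graphBoundary m φ) ∧
                psetDist (Q j).toSet (graphBoundary m φ) ≤ C₀ * pdiam (Q j).toSet) →
          ∑' j, ENNReal.ofReal (pdiam (Q j).toSet ^ q) ≤ ENNReal.ofReal C := by
  classical
  have hq0 : (0 : ℝ) < q := lt_trans (by positivity) hq
  set cn : ℝ := Real.sqrt (4 * ((m : ℝ) + 1) + 2) with hcn_def
  have hcn1 : 1 ≤ cn := by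
    have h1 : cn ^ 2 = 4 * ((m : ℝ) + 1) + 2 :=
      Real.sq_sqrt (show (0:ℝ) ≤ 4 * ((m : ℝ) + 1) + 2 by positivity)
    have h2 : 0 ≤ cn := Real.sqrt_nonneg _
    nlinarith [(Nat.cast_nonneg m : (0:ℝ) ≤ (m:ℝ))]
  have hcn0 : 0 < cn := lt_of_lt_of_le one_pos hcn1
  have hC₀0 : (0 : ℝ) < C₀ := lt_of_lt_of_le one_pos hC₀
  set A₁ : ℝ := (1 + K₀) * (2 + C₀) * cn with hA₁_def
  have hA₁1 : 1 < A₁ := by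
    rw [hA₁_def]
    have h2 : (2:ℝ) * 1 ≤ (2 + C₀) * cn := mul_le_mul (by linarith) hcn1 zero_le_one (by linarith)
    have h3 : (1:ℝ) * (2 * 1) ≤ (1 + K₀) * ((2 + C₀) * cn) :=
      mul_le_mul (by linarith) h2 (by norm_num) (by linarith)
    nlinarith [h3]
  have hA₁0 : 0 < A₁ := by linarith
  have hsqrtm : (0:ℝ) ≤ Real.sqrt ((m:ℝ) + 1) := Real.sqrt_nonneg _
  set W₀ : ℝ := (2 * (1 + A₁ + K₀ * Real.sqrt ((m : ℝ) + 1) + 1)) ^ (m + 1) * 2 with hW₀_def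
  have hW₀0 : 0 < W₀ := by
    have hbase : 0 < 2 * (1 + A₁ + K₀ * Real.sqrt ((m : ℝ) + 1) + 1) := by nlinarith
    exact mul_pos (pow_pos hbase _) (by norm_num)
  set x₀ : ℝ := (2 : ℝ)⁻¹ ^ (q - ((m : ℝ) + 2)) with hx₀_def
  have hx₀0 : 0 < x₀ := Real.rpow_pos_of_pos (by norm_num) _
  have hx₀1 : x₀ < 1 := Real.rpow_lt_one (by norm_num) (by norm_num) (by linarith)
  set B₀ : ℝ := 2 * cn ^ q * W₀ * A₁ with hB₀_def
  have hB₀0 : 0 < B₀ := by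
    rw [hB₀_def]
    have h1 := Real.rpow_pos_of_pos hcn0 q
    positivity
  refine ⟨B₀ * (1 - x₀)⁻¹, mul_pos hB₀0 (inv_pos.mpr (by linarith)), ?_⟩
  intro φ hφ0 hL ι hcount Q hsubset hdisj hwhit
  haveI : Countable ι := hcount
  have hK₀' : (0 : ℝ) ≤ K₀ := hK₀.le
  set w : ℕ → ℝ := fun k => (2 : ℝ)⁻¹ ^ k with hw_def
  have hw0 : ∀ k, 0 < w k := fun k => pow_pos (by norm_num) k
  have hw1 : ∀ k, w k ≤ 1 := fun k => pow_le_one₀ (by norm_num) (by norm_num)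
  have hwsucc : ∀ k, w k = 2 * w (k + 1) := fun k => by
    simp only [hw_def, pow_succ]; ring
  set r : ι → ℝ := fun j => (Q j).half with hr_def
  set D : ι → ℝ := fun j => pdiam (Q j).toSet with hD_def
  have hr0 : ∀ j, 0 < r j := fun j => (Q j).half_pos
  have hD2 : ∀ j, 2 * r j ≤ D j := fun j => two_half_le_pdiam (Q j)
  have hDcn : ∀ j, D j ≤ cn * r j := fun j => by
    have h := pdiam_cube_le (Q j)
    have hcast : Real.sqrt (4 * ((m + 1 : ℕ) : ℝ) + 2) = cn := by
      rw [hcn_def]; push_cast; ring_nf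
    rwa [hcast] at h
  have hD0 : ∀ j, 0 < D j := fun j => lt_of_lt_of_le (by nlinarith [hr0 j]) (hD2 j)
  have hrle1 : ∀ j, r j ≤ 1 := fun j =>
    (le_of_lt (cube_half_lt (Q j) (fun z hz => (hsubset j hz).2))).trans (by norm_num)
  have hKex : ∀ j, ∃ k : ℕ, (2 : ℝ)⁻¹ ^ (k + 1) < r j ∧ r j ≤ (2 : ℝ)⁻¹ ^ k := fun j =>
    exists_dyadic (hr0 j) (hrle1 j)
  set K : ι → ℕ := fun j => (hKex j).choose with hK_def
  have hK1 : ∀ j, w (K j + 1) < r j := fun j => (hKex j).choose_spec.1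
  have hK2 : ∀ j, r j ≤ w (K j) := fun j => (hKex j).choose_spec.2
  have hbddB : ∀ j, BddBelow (Set.image2 pdist (Q j).toSet (graphBoundary m φ)) := fun j =>
    ⟨0, by rintro d ⟨a, _, b, _, rfl⟩; exact pdist_nonneg _ _⟩
  -- lower bound for g on each cube
  have hglb : ∀ j, ∀ z ∈ (Q j).toSet, C₀⁻¹ * D j ≤ gfun φ z := by
    intro j z hz
    have hzΩ : z ∈ graphDomain m φ := (hsubset j hz).1
    have hg0 : 0 < gfun φ z := sub_pos.mpr hzΩ
    have hmem : pdist z ((z.1 + EuclideanSpace.single (Fin.last m)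
        (φ (fun i => z.1 i.castSucc, z.2) - z.1 (Fin.last m)), z.2) : Pt (m + 1)) ∈
        Set.image2 pdist (Q j).toSet (graphBoundary m φ) :=
      Set.mem_image2_of_mem hz (gamma_proj_mem φ z)
    have h1 : psetDist (Q j).toSet (graphBoundary m φ) ≤ |gfun φ z| := by
      rw [← pdist_gamma_proj φ z]
      exact csInf_le (hbddB j) hmem
    rw [abs_of_pos hg0] at h1
    exact le_trans (hwhit j).1 h1
  -- upper bound for g on each cube
  have hgub : ∀ j, ∀ z ∈ (Q j).toSet, gfun φ z ≤ A₁ * r j := by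
    intro j z hz
    have hne : (Set.image2 pdist (Q j).toSet (graphBoundary m φ)).Nonempty :=
      ⟨_, Set.mem_image2_of_mem (center_mem (Q j)) (zero_mem_gamma hφ0)⟩
    obtain ⟨d, hdmem, hdlt⟩ := Real.lt_sInf_add_pos hne (hD0 j)
    obtain ⟨a, ha, b, hb, rfl⟩ := hdmem
    have h1 : gfun φ z ≤ (1 + K₀) * pdist z b := gfun_le_pdist hL hK₀' z b hb
    have h2 : pdist z b ≤ pdist z a + pdist a b := pdist_triangle z a b
    have h3 : pdist z a ≤ D j := pdist_le_pdiam (Q j) hz ha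
    have h5 : sInf (Set.image2 pdist (Q j).toSet (graphBoundary m φ)) ≤ C₀ * D j := (hwhit j).2
    have h4 : pdist z b ≤ (2 + C₀) * D j := by linarith
    have h6 : gfun φ z ≤ (1 + K₀) * (2 + C₀) * D j := by
      calc gfun φ z ≤ (1 + K₀) * pdist z b := h1
        _ ≤ (1 + K₀) * ((2 + C₀) * D j) := mul_le_mul_of_nonneg_left h4 (by linarith)
        _ = (1 + K₀) * (2 + C₀) * D j := by ring
    calc gfun φ z ≤ (1 + K₀) * (2 + C₀) * D j := h6
      _ ≤ (1 + K₀) * (2 + C₀) * (cn * r j) :=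
          mul_le_mul_of_nonneg_left (hDcn j) (by nlinarith)
      _ = A₁ * r j := by rw [hA₁_def]; ring
  -- strip inclusion
  have hstrip : ∀ j, (Q j).toSet ⊆ Eset φ (C₀⁻¹ * w (K j)) (A₁ * w (K j)) := by
    intro j z hz
    obtain ⟨hzΩ, hzcyl⟩ := hsubset j hz
    obtain ⟨hz1, hz2, hz3⟩ := hzcyl
    have h01 : ((0 : Pt (m + 1)).1 : EuclideanSpace ℝ (Fin (m + 1))) = 0 := rfl
    have h02 : ((0 : Pt (m + 1)).2 : ℝ) = 0 := rfl
    rw [h01, sub_zero] at hz1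
    rw [h02] at hz2 hz3
    have hzn1 : ‖z.1‖ ≤ 1 := by linarith
    refine ⟨fun i => (abs_coord_le_norm z.1 i.castSucc).trans hzn1, ?_, ?_, ?_⟩
    · rw [abs_le]
      constructor <;> nlinarith
    · have hg := hglb j z hz
      have hC₀inv : (0:ℝ) < C₀⁻¹ := inv_pos.mpr hC₀0
      have hwlt : w (K j) < 2 * r j := by
        rw [hwsucc (K j)]
        have := hK1 j
        linarith
      calc C₀⁻¹ * w (K j) < C₀⁻¹ * (2 * r j) := by
            exact mul_lt_mul_of_pos_left hwlt hC₀inv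
        _ ≤ C₀⁻¹ * D j := mul_le_mul_of_nonneg_left (hD2 j) hC₀inv.le
        _ ≤ gfun φ z := hg
    · exact (hgub j z hz).trans (mul_le_mul_of_nonneg_left (hK2 j) hA₁0.le)
  -- strip volume bound
  have hC₀inv1 : C₀⁻¹ ≤ 1 := by
    have h1 := inv_pos.mpr hC₀0
    nlinarith [mul_inv_cancel₀ hC₀0.ne']
  have hEvol : ∀ k : ℕ, volume (Eset φ (C₀⁻¹ * w k) (A₁ * w k)) ≤
      ENNReal.ofReal (W₀ * (A₁ * w k)) := by
    intro k
    set δ : ℝ := (A₁ - C₀⁻¹) * w k with hδ_def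
    have hC₀inv : (0:ℝ) < C₀⁻¹ := inv_pos.mpr hC₀0
    have hδ0 : 0 < δ := mul_pos (by linarith) (hw0 k)
    have hδA : δ ≤ A₁ := by
      have h1 := hw1 k
      have h2 := hw0 k
      nlinarith
    have htr : volume (Eset φ (C₀⁻¹ * w k) (A₁ * w k)) = volume (Eset φ 0 δ) := by
      have h := Eset_translate φ 0 δ (C₀⁻¹ * w k)
      rw [zero_add] at h
      calc volume (Eset φ (C₀⁻¹ * w k) (A₁ * w k))
          = volume (Eset φ (C₀⁻¹ * w k) (δ + C₀⁻¹ * w k)) := by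
            rw [show δ + C₀⁻¹ * w k = A₁ * w k from by rw [hδ_def]; ring]
        _ = volume (Eset φ 0 δ) := h
    rw [htr]
    refine (Ekey hφ0 hL hK₀' hA₁0 hδ0 hδA).trans ?_
    apply ENNReal.ofReal_le_ofReal
    have hδle : δ ≤ A₁ * w k := by
      have h0 : 0 < C₀⁻¹ * w k := mul_pos hC₀inv (hw0 k)
      rw [hδ_def]; nlinarith
    calc (2 * (1 + A₁ + K₀ * Real.sqrt ((m:ℝ) + 1) + 1)) ^ (m + 1) * 2 * δ = W₀ * δ := by
          rw [hW₀_def]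
      _ ≤ W₀ * (A₁ * w k) := mul_le_mul_of_nonneg_left hδle hW₀0.le
  -- lower volume bound for cube interiors
  set vlow : ℕ → ℝ≥0∞ :=
    fun k => ENNReal.ofReal ((2 * w (k + 1)) ^ (m + 1) * (2 * w (k + 1) ^ 2)) with hvlow_def
  have hvlowpos : ∀ k, (0:ℝ) < (2 * w (k + 1)) ^ (m + 1) * (2 * w (k + 1) ^ 2) := fun k => by
    have h := hw0 (k + 1)
    have h1 : (0:ℝ) < 2 * w (k + 1) := by linarith
    have h2 : (0:ℝ) < w (k + 1) ^ 2 := pow_pos h 2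
    exact mul_pos (pow_pos h1 _) (by linarith)
  have hvlow0 : ∀ k, vlow k ≠ 0 := fun k => by
    rw [hvlow_def]
    exact (ENNReal.ofReal_pos.mpr (hvlowpos k)).ne'
  have hvlowtop : ∀ k, vlow k ≠ ⊤ := fun k => ENNReal.ofReal_ne_top
  have hvlow_le : ∀ j, vlow (K j) ≤ volume (interior (Q j).toSet) := by
    intro j
    set O : Set (Pt (m + 1)) := {z | (∀ i, |z.1 i - (Q j).center.1 i| < r j) ∧
      |z.2 - (Q j).center.2| < r j ^ 2} with hO_def
    have hOsub : O ⊆ interior (Q j).toSet := by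
      apply interior_maximal ?_ (open_cube_isOpen (Q j).center (r j) (r j ^ 2))
      rintro z ⟨h1, h2⟩
      exact ⟨fun i => (h1 i).le, h2.le⟩
    have hOvol : volume O = ENNReal.ofReal ((2 * r j) ^ (m + 1) * (2 * r j ^ 2)) := by
      rw [hO_def, volume_open_cube]
      rw [← ENNReal.ofReal_pow (by linarith [hr0 j] : (0:ℝ) ≤ 2 * r j),
        ← ENNReal.ofReal_mul (pow_nonneg (by linarith [hr0 j] : (0:ℝ) ≤ 2 * r j) _)]
    calc vlow (K j) ≤ volume O := by
          rw [hOvol, hvlow_def]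
          apply ENNReal.ofReal_le_ofReal
          have hlt := (hK1 j).le
          have hwp := (hw0 (K j + 1)).le
          have h1 : (2 * w (K j + 1)) ^ (m + 1) ≤ (2 * r j) ^ (m + 1) :=
            pow_le_pow_left₀ (by linarith) (by linarith) _
          have h2 : 2 * w (K j + 1) ^ 2 ≤ 2 * r j ^ 2 := by nlinarith
          have hsq2 : (0:ℝ) < w (K j + 1) ^ 2 := pow_pos (hw0 _) 2
          have h3 := mul_le_mul h1 h2 (by linarith) (pow_nonneg (by linarith [hr0 j]) _)
          exact h3
      _ ≤ volume (interior (Q j).toSet) := measure_mono hOsub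
  -- per-fiber bound
  set F : ι → ℝ≥0∞ := fun j => ENNReal.ofReal (D j ^ q) with hF_def
  have hfiber : ∀ k : ℕ, (∑' jj : {j : ι // K j = k}, F jj.1) ≤
      (ENNReal.ofReal ((cn * w k) ^ q) / vlow k) * ENNReal.ofReal (W₀ * (A₁ * w k)) := by
    intro k
    set X : ℝ≥0∞ := ENNReal.ofReal ((cn * w k) ^ q) with hX_def
    have hstep : ∀ jj : {j : ι // K j = k},
        F jj.1 ≤ (X / vlow k) * volume (interior (Q jj.1).toSet) := by
      rintro ⟨j, hjk⟩
      have h1 : F j ≤ X := by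
        rw [hF_def, hX_def]
        apply ENNReal.ofReal_le_ofReal
        apply Real.rpow_le_rpow (hD0 j).le ?_ hq0.le
        calc D j ≤ cn * r j := hDcn j
          _ ≤ cn * w (K j) := mul_le_mul_of_nonneg_left (hK2 j) hcn0.le
          _ = cn * w k := by rw [hjk]
      calc F j ≤ X := h1
        _ = (X / vlow k) * vlow k := (ENNReal.div_mul_cancel (hvlow0 k) (hvlowtop k)).symm
        _ ≤ (X / vlow k) * volume (interior (Q j).toSet) := by
            apply mul_le_mul_right
            rw [← hjk]; exact hvlow_le j
    calc (∑' jj : {j : ι // K j = k}, F jj.1)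
        ≤ ∑' jj : {j : ι // K j = k}, (X / vlow k) * volume (interior (Q jj.1).toSet) :=
          ENNReal.tsum_le_tsum hstep
      _ = (X / vlow k) * ∑' jj : {j : ι // K j = k}, volume (interior (Q jj.1).toSet) :=
          ENNReal.tsum_mul_left
      _ ≤ (X / vlow k) * ENNReal.ofReal (W₀ * (A₁ * w k)) := by
          apply mul_le_mul_right
          have hdisj' : Pairwise (Function.onFun Disjoint
              fun jj : {j : ι // K j = k} => interior (Q jj.1).toSet) := by
            intro a b hab
            have hne : a.1 ≠ b.1 := fun h => hab (Subtype.ext h)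
            exact Set.disjoint_iff_inter_eq_empty.mpr (hdisj a.1 b.1 hne)
          rw [← measure_iUnion hdisj' (fun jj => isOpen_interior.measurableSet)]
          refine (measure_mono ?_).trans (hEvol k)
          apply Set.iUnion_subset
          intro jj
          refine interior_subset.trans ?_
          have h := hstrip jj.1
          rw [jj.2] at h
          exact h
  -- k-th term computation
  have hterm : ∀ k : ℕ, (ENNReal.ofReal ((cn * w k) ^ q) / vlow k) *
      ENNReal.ofReal (W₀ * (A₁ * w k)) = ENNReal.ofReal B₀ * (ENNReal.ofReal x₀) ^ k := by
    intro k
    have hu0 : 0 < w k := hw0 k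
    have hden0 := hvlowpos k
    have hv2 : w (k + 1) = w k * 2⁻¹ := by simp only [hw_def, pow_succ]
    have hden : (2 * w (k + 1)) ^ (m + 1) * (2 * w (k + 1) ^ 2) = w k ^ (m + 3) / 2 := by
      rw [hv2]
      rw [show 2 * (w k * 2⁻¹) = w k by ring]
      rw [show 2 * (w k * 2⁻¹) ^ 2 = w k ^ 2 / 2 by ring]
      rw [show w k ^ (m + 1) * (w k ^ 2 / 2) = (w k ^ (m + 1) * w k ^ 2) / 2 by ring, ← pow_add]
    have hmulr : (cn * w k) ^ q = cn ^ q * w k ^ q := Real.mul_rpow hcn0.le hu0.le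
    have hpowid : w k ^ q * w k / w k ^ (m + 3) = x₀ ^ k := by
      have hna : (w k : ℝ) ^ (m + 3 : ℕ) = w k ^ (((m + 3 : ℕ) : ℝ)) := (Real.rpow_natCast _ _).symm
      rw [hna]
      rw [show w k ^ q * w k = w k ^ (q + 1) from by
        rw [Real.rpow_add hu0, Real.rpow_one]]
      rw [← Real.rpow_sub hu0]
      have hexp : q + 1 - ((m + 3 : ℕ) : ℝ) = q - ((m : ℝ) + 2) := by push_cast; ring
      rw [hexp]
      simp only [hw_def]
      rw [← Real.rpow_natCast (2⁻¹ : ℝ) k, ← Real.rpow_mul (by norm_num : (0:ℝ) ≤ 2⁻¹),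
        mul_comm ((k : ℝ)) (q - ((m : ℝ) + 2)), Real.rpow_mul (by norm_num : (0:ℝ) ≤ 2⁻¹),
        Real.rpow_natCast, hx₀_def]
    have hp3 : (0 : ℝ) < w k ^ (m + 3) := pow_pos hu0 _
    have hsq : (0:ℝ) < w k ^ q := Real.rpow_pos_of_pos hu0 q
    have halg : cn ^ q * w k ^ q / (w k ^ (m + 3) / 2) * (W₀ * (A₁ * w k)) =
        (2 * cn ^ q * W₀ * A₁) * (w k ^ q * w k / w k ^ (m + 3)) := by
      field_simp
    have hreal : (cn * w k) ^ q / ((2 * w (k + 1)) ^ (m + 1) * (2 * w (k + 1) ^ 2)) *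
        (W₀ * (A₁ * w k)) = B₀ * x₀ ^ k := by
      rw [hmulr, hden, halg, hpowid, hB₀_def]
    rw [hvlow_def]
    rw [← ENNReal.ofReal_div_of_pos hden0]
    rw [← ENNReal.ofReal_mul (by positivity)]
    rw [hreal]
    rw [ENNReal.ofReal_mul hB₀0.le, ENNReal.ofReal_pow hx₀0.le]
  -- conclusion
  have he : (∑' j, F j) = ∑' (k : ℕ), ∑' (jj : {j : ι // K j = k}), F jj.1 := by
    rw [← Equiv.tsum_eq (Equiv.sigmaFiberEquiv K) F, ENNReal.tsum_sigma']
    rfl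
  have hgeom : (∑' k : ℕ, ENNReal.ofReal B₀ * (ENNReal.ofReal x₀) ^ k) =
      ENNReal.ofReal B₀ * (1 - ENNReal.ofReal x₀)⁻¹ := by
    rw [ENNReal.tsum_mul_left, ENNReal.tsum_geometric]
  have hfin : ENNReal.ofReal B₀ * (1 - ENNReal.ofReal x₀)⁻¹ =
      ENNReal.ofReal (B₀ * (1 - x₀)⁻¹) := by
    rw [ENNReal.ofReal_mul hB₀0.le]
    congr 1
    rw [← ENNReal.ofReal_one, ← ENNReal.ofReal_sub 1 hx₀0.le]
    exact (ENNReal.ofReal_inv_of_pos (by linarith)).symm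
  calc (∑' j, ENNReal.ofReal (pdiam (Q j).toSet ^ q)) = ∑' j, F j :=
        tsum_congr fun j => rfl
    _ = ∑' (k : ℕ), ∑' (jj : {j : ι // K j = k}), F jj.1 := he
    _ ≤ ∑' (k : ℕ), (ENNReal.ofReal ((cn * w k) ^ q) / vlow k) *
          ENNReal.ofReal (W₀ * (A₁ * w k)) := ENNReal.tsum_le_tsum hfiber
    _ = ∑' k : ℕ, ENNReal.ofReal B₀ * (ENNReal.ofReal x₀) ^ k := tsum_congr hterm
    _ = ENNReal.ofReal B₀ * (1 - ENNReal.ofReal x₀)⁻¹ := hgeom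
    _ = ENNReal.ofReal (B₀ * (1 - x₀)⁻¹) := hfin
end

section
/- Summability of the iteration scales (estimate (Ak) in the proof of Theorem 1.1): Let η, α ∈ (0,1) and let ω : [0,∞) → [0,∞) be nondecreasing with ω(1) ≤ η² and ∫₀¹ ω(r)/r dr ≤ η². Define A₀ := η² and, for k ≥ 0, A_{k+1} := max(ω(η^k), η^{α/2}·A_k). Then Σ_{k=0}^∞ A_k ≤ ((3−2η)/((1−η)·(1−η^{α/2})))·η². In particular, Σ_{k=0}^∞ A_k ≤ 4·η² whenever (3−2η)/((1−η)·(1−η^{α/2})) ≤ 4. -/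
open MeasureTheory Set
open scoped ENNReal

/-- **Summability of the iteration scales** (estimate (Ak) in the proof of Theorem 1.1):
if `ω` is nondecreasing and nonnegative with `ω(1) ≤ η²` and `∫₀¹ ω(r)/r dr ≤ η²`, and
`A₀ = η²`, `A_{k+1} = max(ω(η^k), η^{α/2}·A_k)`, then
`Σ_{k=0}^∞ A_k ≤ ((3-2η)/((1-η)(1-η^{α/2})))·η²`; in particular `Σ_{k=0}^∞ A_k ≤ 4η²`
whenever `(3-2η)/((1-η)(1-η^{α/2})) ≤ 4`.  (The sum of the nonnegative terms `A_k` is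
expressed through its partial sums.) -/
theorem iteration_scales_sum
    (η α : ℝ) (hη0 : 0 < η) (hη1 : η < 1) (hα0 : 0 < α) (hα1 : α < 1)
    (ω : ℝ → ℝ) (hnn : ∀ r, 0 ≤ ω r) (hmono : MonotoneOn ω (Ici 0))
    (hω1 : ω 1 ≤ η ^ 2)
    (hint : (∫⁻ r in Ioo (0 : ℝ) 1, ENNReal.ofReal (ω r / r)) ≤ ENNReal.ofReal (η ^ 2))
    (A : ℕ → ℝ) (hA0 : A 0 = η ^ 2)
    (hAk : ∀ k : ℕ, A (k + 1) = max (ω (η ^ k)) (η ^ (α / 2) * A k)) :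
    (∀ N : ℕ, ∑ k ∈ Finset.range N, A k ≤
        (3 - 2 * η) / ((1 - η) * (1 - η ^ (α / 2))) * η ^ 2) ∧
      ((3 - 2 * η) / ((1 - η) * (1 - η ^ (α / 2))) ≤ 4 →
        ∀ N : ℕ, ∑ k ∈ Finset.range N, A k ≤ 4 * η ^ 2) := by
  set q : ℝ := η ^ (α / 2) with hqdef
  have hq0 : 0 < q := Real.rpow_pos_of_pos hη0 _
  have hq1 : q < 1 := Real.rpow_lt_one hη0.le hη1 (by positivity)
  have hη2 : (0:ℝ) ≤ η ^ 2 := sq_nonneg η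
  have h1η : (0:ℝ) < 1 - η := by linarith
  have h1q : (0:ℝ) < 1 - q := by linarith
  -- the disjoint intervals
  have hpow_pos : ∀ j : ℕ, (0:ℝ) < η ^ j := fun j => pow_pos hη0 j
  have hpow_lt : ∀ j : ℕ, η ^ (j + 1) < η ^ j := fun j =>
    pow_lt_pow_right_of_lt_one₀ hη0 hη1 (Nat.lt_succ_self j)
  -- Step 1: for each j, ofReal ((1-η) * ω (η^(j+1))) ≤ ∫ over Ioo (η^(j+1)) (η^j)
  have h1 : ∀ j : ℕ, ENNReal.ofReal ((1 - η) * ω (η ^ (j + 1))) ≤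
      ∫⁻ r in Ioo (η ^ (j + 1)) (η ^ j), ENNReal.ofReal (ω r / r) := by
    intro j
    have hc : (1 - η) * ω (η ^ (j + 1)) = ω (η ^ (j + 1)) / η ^ j * (η ^ j - η ^ (j + 1)) := by
      field_simp
      ring
    calc ENNReal.ofReal ((1 - η) * ω (η ^ (j + 1)))
        = ENNReal.ofReal (ω (η ^ (j + 1)) / η ^ j) * ENNReal.ofReal (η ^ j - η ^ (j + 1)) := by
          rw [hc, ENNReal.ofReal_mul (div_nonneg (hnn _) (hpow_pos j).le)]
      _ = ∫⁻ _ in Ioo (η ^ (j + 1)) (η ^ j), ENNReal.ofReal (ω (η ^ (j + 1)) / η ^ j) := by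
          rw [setLIntegral_const, Real.volume_Ioo]
      _ ≤ ∫⁻ r in Ioo (η ^ (j + 1)) (η ^ j), ENNReal.ofReal (ω r / r) := by
          apply setLIntegral_mono' measurableSet_Ioo
          intro x hx
          apply ENNReal.ofReal_le_ofReal
          apply div_le_div₀ (hnn x)
          · exact hmono (le_of_lt (hpow_pos (j+1))) (le_of_lt ((hpow_pos (j+1)).trans hx.1)) hx.1.le
          · exact (hpow_pos (j+1)).trans hx.1
          · exact hx.2.le
  -- Step 2: partial sums of shifted ω values
  have hI : ∀ M : ℕ, ∑ j ∈ Finset.range M, (1 - η) * ω (η ^ (j + 1)) ≤ η ^ 2 := by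
    intro M
    have hsub : ∀ j : ℕ, Ioo (η ^ (j + 1)) (η ^ j) ⊆ Ioo (0:ℝ) 1 := by
      intro j x hx
      constructor
      · exact (hpow_pos (j+1)).trans hx.1
      · exact hx.2.trans_le (pow_le_one₀ hη0.le hη1.le)
    have hdisj : (↑(Finset.range M) : Set ℕ).PairwiseDisjoint
        (fun j => Ioo (η ^ (j + 1)) (η ^ j)) := by
      have key : ∀ i j : ℕ, i < j →
          Disjoint (Ioo (η ^ (i + 1)) (η ^ i)) (Ioo (η ^ (j + 1)) (η ^ j)) := by
        intro i j h
        rw [Set.disjoint_left]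
        intro x hxi hxj
        have hle : η ^ j ≤ η ^ (i + 1) := pow_le_pow_of_le_one hη0.le hη1.le h
        exact absurd (hxj.2.trans_le (hle.trans hxi.1.le)) (lt_irrefl x)
      intro i _ j _ hij
      rcases hij.lt_or_gt with h | h
      · exact key i j h
      · exact (key j i h).symm
    have key : ENNReal.ofReal (∑ j ∈ Finset.range M, (1 - η) * ω (η ^ (j + 1))) ≤
        ENNReal.ofReal (η ^ 2) := by
      rw [ENNReal.ofReal_sum_of_nonneg
        (fun j _ => mul_nonneg h1η.le (hnn _))]
      calc ∑ j ∈ Finset.range M, ENNReal.ofReal ((1 - η) * ω (η ^ (j + 1)))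
            ≤ ∑ j ∈ Finset.range M, ∫⁻ r in Ioo (η ^ (j + 1)) (η ^ j),
              ENNReal.ofReal (ω r / r) := Finset.sum_le_sum fun j _ => h1 j
          _ = ∫⁻ r in ⋃ j ∈ Finset.range M, Ioo (η ^ (j + 1)) (η ^ j),
              ENNReal.ofReal (ω r / r) :=
              (lintegral_biUnion_finset hdisj (fun j _ => measurableSet_Ioo) _).symm
          _ ≤ ∫⁻ r in Ioo (0:ℝ) 1, ENNReal.ofReal (ω r / r) :=
              lintegral_mono_set (Set.iUnion₂_subset fun j _ => hsub j)
          _ ≤ ENNReal.ofReal (η ^ 2) := hint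
    exact (ENNReal.ofReal_le_ofReal_iff hη2).mp key
  -- Step 3: bound on Σ ω(η^k)
  have hW : ∀ N : ℕ, ∑ k ∈ Finset.range N, ω (η ^ k) ≤ η ^ 2 + η ^ 2 / (1 - η) := by
    intro N
    cases N with
    | zero => simp; positivity
    | succ M =>
      rw [Finset.sum_range_succ']
      have h2 : ∑ j ∈ Finset.range M, ω (η ^ (j + 1)) ≤ η ^ 2 / (1 - η) := by
        rw [le_div_iff₀ h1η]
        calc (∑ j ∈ Finset.range M, ω (η ^ (j + 1))) * (1 - η)
            = ∑ j ∈ Finset.range M, (1 - η) * ω (η ^ (j + 1)) := by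
              rw [Finset.sum_mul]; exact Finset.sum_congr rfl fun j _ => mul_comm _ _
          _ ≤ η ^ 2 := hI M
      have h3 : ω (η ^ (0:ℕ)) ≤ η ^ 2 := by simpa using hω1
      linarith
  -- A is nonnegative
  have hAnn : ∀ k : ℕ, 0 ≤ A k := by
    intro k
    cases k with
    | zero => rw [hA0]; positivity
    | succ m => rw [hAk m]; exact le_max_of_le_left (hnn _)
  -- the limit constant
  set L : ℝ := (3 - 2 * η) / ((1 - η) * (1 - q)) * η ^ 2 with hLdef
  have hLkey : η ^ 2 + (η ^ 2 + η ^ 2 / (1 - η)) + q * L = L := by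
    rw [hLdef]
    field_simp
    ring
  -- Main induction
  have hS : ∀ N : ℕ, ∑ k ∈ Finset.range N, A k ≤ L := by
    intro N
    induction N with
    | zero =>
      simp only [Finset.range_zero, Finset.sum_empty]
      rw [hLdef]
      exact mul_nonneg (div_nonneg (by linarith) (mul_nonneg h1η.le h1q.le)) hη2
    | succ N ih =>
      rw [Finset.sum_range_succ']
      have hstep : ∀ j : ℕ, A (j + 1) ≤ ω (η ^ j) + q * A j := by
        intro j
        rw [hAk j]
        apply max_le
        · nlinarith [hAnn j, hq0.le]
        · nlinarith [hnn (η ^ j)]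
      calc (∑ j ∈ Finset.range N, A (j + 1)) + A 0
          ≤ (∑ j ∈ Finset.range N, (ω (η ^ j) + q * A j)) + η ^ 2 := by
            rw [hA0]
            exact add_le_add (Finset.sum_le_sum fun j _ => hstep j) le_rfl
        _ = (∑ j ∈ Finset.range N, ω (η ^ j)) + q * (∑ j ∈ Finset.range N, A j) + η ^ 2 := by
            rw [Finset.sum_add_distrib, Finset.mul_sum]
        _ ≤ (η ^ 2 + η ^ 2 / (1 - η)) + q * L + η ^ 2 := by
            have := hW N
            nlinarith [hq0.le]
        _ = L := by linarith [hLkey]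
  refine ⟨hS, fun h4 N => ?_⟩
  calc ∑ k ∈ Finset.range N, A k ≤ L := hS N
    _ ≤ 4 * η ^ 2 := by rw [hLdef]; nlinarith
end
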